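/- arXiv:2112.04175 — 4 statements merged into one kernel-verified Lean document; each statement's English description precedes it below -/
import Mathlib

section
/- The alternating group A₆ admits no faithful complex representation of dimension at most 4. -/
open Matrix LinearMap Equiv Equiv.Perm

private def pl (l : List (Fin 6)) : Equiv.Perm (Fin 6) := l.formPerm

private abbrev G6 := alternatingGroup (Fin 6)

private def gx : G6 := ⟨pl [0,1,2], by rw [Equiv.Perm.mem_alternatingGroup]; decide⟩
private def gz : G6 := ⟨pl [3,4,5], by rw [Equiv.Perm.mem_alternatingGroup]; decide⟩
private def gt1 : G6 := ⟨pl [0,1] * pl [2,3], by rw [Equiv.Perm.mem_alternatingGroup]; decide⟩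
private def gt2 : G6 := ⟨pl [0,2] * pl [1,3], by rw [Equiv.Perm.mem_alternatingGroup]; decide⟩
private def gt3 : G6 := ⟨pl [0,3] * pl [1,2], by rw [Equiv.Perm.mem_alternatingGroup]; decide⟩
private def gs1 : G6 := ⟨pl [0,3] * pl [1,4], by rw [Equiv.Perm.mem_alternatingGroup]; decide⟩
private def gs2 : G6 := ⟨pl [1,4] * pl [2,5], by rw [Equiv.Perm.mem_alternatingGroup]; decide⟩
private def gs3 : G6 := ⟨pl [0,3] * pl [2,5], by rw [Equiv.Perm.mem_alternatingGroup]; decide⟩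
private def wxt1 : G6 := ⟨pl [1,3,2], by rw [Equiv.Perm.mem_alternatingGroup]; decide⟩
private def wxt2 : G6 := ⟨pl [0,3,1], by rw [Equiv.Perm.mem_alternatingGroup]; decide⟩
private def wxt3 : G6 := ⟨pl [1,2,3], by rw [Equiv.Perm.mem_alternatingGroup]; decide⟩
private def wx2 : G6 := ⟨pl [1,2] * pl [4,5], by rw [Equiv.Perm.mem_alternatingGroup]; decide⟩
private def wx2t1 : G6 := ⟨pl [0,3,2,1] * pl [4,5], by rw [Equiv.Perm.mem_alternatingGroup]; decide⟩
private def wx2t2 : G6 := ⟨pl [2,3] * pl [4,5], by rw [Equiv.Perm.mem_alternatingGroup]; decide⟩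
private def wx2t3 : G6 := ⟨pl [1,3] * pl [4,5], by rw [Equiv.Perm.mem_alternatingGroup]; decide⟩
private def wz : G6 := ⟨pl [0,3] * pl [1,5,2,4], by rw [Equiv.Perm.mem_alternatingGroup]; decide⟩
private def wz2 : G6 := ⟨pl [0,3] * pl [1,4,2,5], by rw [Equiv.Perm.mem_alternatingGroup]; decide⟩
private def wys1 : G6 := ⟨pl [0,3,2,5,1], by rw [Equiv.Perm.mem_alternatingGroup]; decide⟩
private def wys2 : G6 := ⟨pl [0,3,1,4,2], by rw [Equiv.Perm.mem_alternatingGroup]; decide⟩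
private def wys3 : G6 := ⟨pl [1,3,5,2,4], by rw [Equiv.Perm.mem_alternatingGroup]; decide⟩
private def wy2 : G6 := ⟨pl [1,2] * pl [4,5], by rw [Equiv.Perm.mem_alternatingGroup]; decide⟩
private def wy2s1 : G6 := ⟨pl [1,3,4,2,5], by rw [Equiv.Perm.mem_alternatingGroup]; decide⟩
private def wy2s2 : G6 := ⟨pl [0,3,1] * pl [2,4,5], by rw [Equiv.Perm.mem_alternatingGroup]; decide⟩
private def wy2s3 : G6 := ⟨pl [0,3,2] * pl [1,5,4], by rw [Equiv.Perm.mem_alternatingGroup]; decide⟩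
private def wxz2 : G6 := ⟨pl [0,3] * pl [1,4,2,5], by rw [Equiv.Perm.mem_alternatingGroup]; decide⟩
private def wx2z : G6 := ⟨pl [0,3] * pl [1,5,2,4], by rw [Equiv.Perm.mem_alternatingGroup]; decide⟩
private def wx2z2 : G6 := ⟨pl [1,2] * pl [4,5], by rw [Equiv.Perm.mem_alternatingGroup]; decide⟩


noncomputable def om : ℂ := (-1 + Real.sqrt 3 * Complex.I)/2

lemma om_sq : om^2 + om + 1 = 0 := by
  have hs : ((Real.sqrt 3 : ℝ) : ℂ)^2 = 3 := by
    rw [← Complex.ofReal_pow, Real.sq_sqrt (by norm_num : (0:ℝ) ≤ 3)]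
    norm_num
  unfold om
  linear_combination (((Real.sqrt 3 : ℝ):ℂ)^2/4) * Complex.I_sq - (1/4) * hs

lemma om_cube : om^3 = 1 := by linear_combination (om - 1) * om_sq
lemma om_sum : om^2 + om = -1 := by linear_combination om_sq

lemma trace_idem {n : ℕ} (E : Matrix (Fin n) (Fin n) ℂ) (hE : E * E = E) :
    ∃ k : ℕ, E.trace = k ∧ (k = 0 → E = 0) := by
  set f := Matrix.toLin' E with hfdef
  have hf : f ∘ₗ f = f := by rw [hfdef, ← Matrix.toLin'_mul, hE]
  obtain ⟨p, hp⟩ := (LinearMap.isProj_iff_isIdempotentElem f).mpr hf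
  have htr : LinearMap.trace ℂ _ f = (Module.finrank ℂ p : ℂ) := hp.trace
  have htrE : LinearMap.trace ℂ _ f = E.trace := by
    rw [LinearMap.trace_eq_matrix_trace ℂ (Pi.basisFun ℂ (Fin n)) f]
    congr 1
    rw [← LinearMap.toMatrix'_toLin' E]
    rfl
  refine ⟨Module.finrank ℂ p, by rw [← htrE, htr], fun h0 => ?_⟩
  have hp0 : p = ⊥ := Submodule.finrank_eq_zero.mp h0
  have hfz : f = 0 := by
    apply LinearMap.ext; intro v
    have := hp.map_mem v
    rw [hp0, Submodule.mem_bot] at this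
    simpa using this
  have h2 := congrArg (fun g => LinearMap.toMatrix' g) hfz
  simp only [hfdef, LinearMap.toMatrix'_toLin'] at h2
  rw [h2]
  exact LinearMap.toMatrix'.map_zero

lemma A4trace {n : ℕ} (hn : n ≤ 4) (U T1 T2 T3 : Matrix (Fin n) (Fin n) ℂ)
    (h11 : T1*T1 = 1) (h22 : T2*T2 = 1) (h33 : T3*T3 = 1)
    (h12 : T1*T2 = T3) (h21 : T2*T1 = T3) (h13 : T1*T3 = T2) (h31 : T3*T1 = T2)
    (h23 : T2*T3 = T1) (h32 : T3*T2 = T1)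
    (hU3 : U*(U*U) = 1)
    (hUT1 : U*T1 = T3*U) (hUT2 : U*T2 = T1*U) (hUT3 : U*T3 = T2*U)
    (htrT2 : T2.trace = T1.trace) (htrT3 : T3.trace = T1.trace)
    (htrU1 : (U*T1).trace = U.trace) (htrU2 : (U*T2).trace = U.trace)
    (htrU3 : (U*T3).trace = U.trace) (htrUU : (U*U).trace = U.trace)
    (htrUU1 : ((U*U)*T1).trace = U.trace) (htrUU2 : ((U*U)*T2).trace = U.trace)
    (htrUU3 : ((U*U)*T3).trace = U.trace)
    (hT1 : T1 ≠ 1) :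
    ∃ m₀ m₁ : ℕ, n = m₀ + 3*m₁ ∧ m₁ ≠ 0 ∧ U.trace = m₀ := by
  have h4 : (4:ℂ) ≠ 0 := by norm_num
  have trace_one' : (1 : Matrix (Fin n) (Fin n) ℂ).trace = n := by
    simp [Matrix.trace_one]
  -- the four "projectors" (times 4)
  set S0 : Matrix (Fin n) (Fin n) ℂ := 1 + T1 + T2 + T3 with hS0def
  set S1 : Matrix (Fin n) (Fin n) ℂ := 1 + T1 - T2 - T3 with hS1def
  set S2 : Matrix (Fin n) (Fin n) ℂ := 1 - T1 + T2 - T3 with hS2def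
  set S3 : Matrix (Fin n) (Fin n) ℂ := 1 - T1 - T2 + T3 with hS3def
  have hS0S0 : S0 * S0 = (4:ℂ) • S0 := by
    rw [hS0def]
    simp only [mul_add, add_mul, one_mul, mul_one, h11, h22, h33, h12, h21, h13, h31, h23, h32]
    module
  have hS1S1 : S1 * S1 = (4:ℂ) • S1 := by
    rw [hS1def]
    simp only [mul_add, add_mul, mul_sub, sub_mul, one_mul, mul_one,
      h11, h22, h33, h12, h21, h13, h31, h23, h32]
    module
  have hS2S2 : S2 * S2 = (4:ℂ) • S2 := by
    rw [hS2def]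
    simp only [mul_add, add_mul, mul_sub, sub_mul, one_mul, mul_one,
      h11, h22, h33, h12, h21, h13, h31, h23, h32]
    module
  have hS3S3 : S3 * S3 = (4:ℂ) • S3 := by
    rw [hS3def]
    simp only [mul_add, add_mul, mul_sub, sub_mul, one_mul, mul_one,
      h11, h22, h33, h12, h21, h13, h31, h23, h32]
    module
  have idem : ∀ S : Matrix (Fin n) (Fin n) ℂ, S * S = (4:ℂ) • S →
      ((4⁻¹:ℂ) • S) * ((4⁻¹:ℂ) • S) = (4⁻¹:ℂ) • S := by
    intro S hS
    rw [smul_mul_assoc, mul_smul_comm, hS, smul_smul, smul_smul]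
    norm_num
  -- trace values
  have trS0 : S0.trace = (n:ℂ) + 3 * T1.trace := by
    rw [hS0def]; simp only [Matrix.trace_add, trace_one', htrT2, htrT3]; ring
  have trS1 : S1.trace = (n:ℂ) - T1.trace := by
    rw [hS1def]; simp only [Matrix.trace_add, Matrix.trace_sub, trace_one', htrT2, htrT3]; ring
  have trS2 : S2.trace = (n:ℂ) - T1.trace := by
    rw [hS2def]; simp only [Matrix.trace_add, Matrix.trace_sub, trace_one', htrT2, htrT3]; ring
  have trS3 : S3.trace = (n:ℂ) - T1.trace := by
    rw [hS3def]; simp only [Matrix.trace_add, Matrix.trace_sub, trace_one', htrT2, htrT3]; ring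
  obtain ⟨m0, hm0, _⟩ := trace_idem _ (idem S0 hS0S0)
  obtain ⟨m1, hm1, hm1z⟩ := trace_idem _ (idem S1 hS1S1)
  obtain ⟨m2, hm2, hm2z⟩ := trace_idem _ (idem S2 hS2S2)
  obtain ⟨m3, hm3, hm3z⟩ := trace_idem _ (idem S3 hS3S3)
  rw [Matrix.trace_smul, trS0] at hm0
  rw [Matrix.trace_smul, trS1] at hm1
  rw [Matrix.trace_smul, trS2] at hm2
  rw [Matrix.trace_smul, trS3] at hm3
  -- m1 = m2 = m3
  have hm21 : m2 = m1 := by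
    have : (m2:ℂ) = m1 := by rw [← hm1, ← hm2]
    exact_mod_cast this
  have hm31 : m3 = m1 := by
    have : (m3:ℂ) = m1 := by rw [← hm1, ← hm3]
    exact_mod_cast this
  -- m1 ≠ 0
  have hm1ne : m1 ≠ 0 := by
    intro hz
    have hZ1 : S1 = 0 := by
      have := hm1z hz
      rw [smul_eq_zero] at this
      rcases this with h | h
      · exact absurd h (by norm_num)
      · exact h
    have hZ2 : S2 = 0 := by
      have := hm2z (by rw [hm21, hz])
      rw [smul_eq_zero] at this
      rcases this with h | h
      · exact absurd h (by norm_num)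
      · exact h
    have hZ3 : S3 = 0 := by
      have := hm3z (by rw [hm31, hz])
      rw [smul_eq_zero] at this
      rcases this with h | h
      · exact absurd h (by norm_num)
      · exact h
    -- derive T1 = 1
    have e12 : S1 + S2 = (2:ℂ) • (1 - T3) := by rw [hS1def, hS2def]; module
    have e13 : S1 + S3 = (2:ℂ) • (1 - T2) := by rw [hS1def, hS3def]; module
    have hT3 : T3 = 1 := by
      have : (2:ℂ) • ((1:Matrix (Fin n) (Fin n) ℂ) - T3) = 0 := by rw [← e12, hZ1, hZ2, add_zero]
      rw [smul_eq_zero] at this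
      rcases this with h | h
      · exact absurd h (by norm_num)
      · rw [sub_eq_zero] at h; exact h.symm
    have hT2 : T2 = 1 := by
      have : (2:ℂ) • ((1:Matrix (Fin n) (Fin n) ℂ) - T2) = 0 := by rw [← e13, hZ1, hZ3, add_zero]
      rw [smul_eq_zero] at this
      rcases this with h | h
      · exact absurd h (by norm_num)
      · rw [sub_eq_zero] at h; exact h.symm
    apply hT1
    have : S1 = T1 - 1 := by rw [hS1def, hT2, hT3]; module
    rw [this] at hZ1
    rw [sub_eq_zero] at hZ1
    exact hZ1
  -- now the M analysis
  set E0 : Matrix (Fin n) (Fin n) ℂ := (4⁻¹:ℂ) • S0 with hE0def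
  have hE0E0 : E0 * E0 = E0 := idem S0 hS0S0
  have hUS0 : U * S0 = S0 * U := by
    rw [hS0def]
    simp only [mul_add, add_mul, one_mul, mul_one, hUT1, hUT2, hUT3]
    abel
  set M : Matrix (Fin n) (Fin n) ℂ := U * E0 with hMdef
  have hM' : M = (4⁻¹:ℂ) • (U * S0) := by rw [hMdef, hE0def, mul_smul_comm]
  have key2 : (U*S0)*(U*S0) = (4:ℂ)•(U*U*S0) := by
    calc U*S0*(U*S0) = U*(S0*U)*S0 := by noncomm_ring
    _ = U*(U*S0)*S0 := by rw [← hUS0]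
    _ = U*(U*(S0*S0)) := by noncomm_ring
    _ = U*(U*((4:ℂ)•S0)) := by rw [hS0S0]
    _ = (4:ℂ)•(U*(U*S0)) := by rw [mul_smul_comm, mul_smul_comm]
    _ = (4:ℂ)•(U*U*S0) := by rw [mul_assoc]
  have hM2 : M^2 = (4⁻¹:ℂ) • ((U*U)*S0) := by
    rw [pow_two, hM', smul_mul_assoc, mul_smul_comm, smul_smul, key2, smul_smul]
    norm_num
  have key3 : ((U*U)*S0)*(U*S0) = (4:ℂ) • S0 := by
    calc (U*U)*S0*(U*S0) = (U*U)*(S0*U)*S0 := by noncomm_ring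
    _ = (U*U)*(U*S0)*S0 := by rw [← hUS0]
    _ = (U*(U*U))*(S0*S0) := by noncomm_ring
    _ = (U*(U*U))*((4:ℂ)•S0) := by rw [hS0S0]
    _ = (4:ℂ)•S0 := by rw [hU3, one_mul]
  have hM3 : M^3 = E0 := by
    have h32 : M^3 = M^2 * M := by noncomm_ring
    rw [h32, hM2, hM', smul_mul_assoc, mul_smul_comm, smul_smul, key3, smul_smul, hE0def]
    norm_num
  have hM4 : M^4 = M := by
    have h43 : M^4 = M^3 * M := by noncomm_ring
    have keyE : S0*(U*S0) = (4:ℂ)•(U*S0) := by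
      calc S0*(U*S0) = (S0*U)*S0 := by noncomm_ring
      _ = (U*S0)*S0 := by rw [← hUS0]
      _ = U*(S0*S0) := by noncomm_ring
      _ = U*((4:ℂ)•S0) := by rw [hS0S0]
      _ = (4:ℂ)•(U*S0) := by rw [mul_smul_comm]
    rw [h43, hM3, hE0def, hM', mul_smul_comm, smul_mul_assoc, smul_smul, keyE, smul_smul]
    rw [show (4:ℂ)⁻¹*4⁻¹*4 = 4⁻¹ by norm_num, ← hM']
  have hM5 : M^5 = M^2 := by
    have h54 : M^5 = M^4*M := by noncomm_ring
    rw [h54, hM4]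
    noncomm_ring
  have hM6 : M^6 = M^3 := by
    have h64 : M^6 = M^4*M^2 := by noncomm_ring
    rw [h64, hM4]
    noncomm_ring
  -- trace facts
  have trE0 : E0.trace = (m0:ℂ) := by
    rw [hE0def, Matrix.trace_smul, trS0]; exact hm0
  have trM : M.trace = U.trace := by
    rw [hM', Matrix.trace_smul, hS0def, mul_add, mul_add, mul_add, mul_one,
      Matrix.trace_add, Matrix.trace_add, Matrix.trace_add, htrU1, htrU2, htrU3, smul_eq_mul]
    ring
  have trM2 : (M^2).trace = U.trace := by
    rw [hM2, Matrix.trace_smul, hS0def, mul_add, mul_add, mul_add, mul_one,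
      Matrix.trace_add, Matrix.trace_add, Matrix.trace_add, htrUU, htrUU1, htrUU2, htrUU3,
      smul_eq_mul]
    ring
  have trM3 : (M^3).trace = (m0:ℂ) := by rw [hM3, trE0]
  -- powers multiplication table
  have q1 : M*M = M^2 := by noncomm_ring
  have q2 : M*M^2 = M^3 := by noncomm_ring
  have q3 : M*M^3 = M := by
    have h : M*M^3 = M^4 := by noncomm_ring
    rw [h, hM4]
  have q4 : M^2*M = M^3 := by noncomm_ring
  have q5 : M^2*M^2 = M := by
    have h : M^2*M^2 = M^4 := by noncomm_ring
    rw [h, hM4]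
  have q6 : M^2*M^3 = M^2 := by
    have h : M^2*M^3 = M^5 := by noncomm_ring
    rw [h, hM5]
  have q7 : M^3*M = M := by
    have h : M^3*M = M^4 := by noncomm_ring
    rw [h, hM4]
  have q8 : M^3*M^2 = M^2 := by
    have h : M^3*M^2 = M^5 := by noncomm_ring
    rw [h, hM5]
  have q9 : M^3*M^3 = M^3 := by
    have h : M^3*M^3 = M^6 := by noncomm_ring
    rw [h, hM6]
  -- the two idempotents built from M
  have hf1 : ((3⁻¹:ℂ)•(M + M^2 + M^3)) * ((3⁻¹:ℂ)•(M + M^2 + M^3))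
      = (3⁻¹:ℂ)•(M + M^2 + M^3) := by
    have expand : (M + M^2 + M^3) * (M + M^2 + M^3) = (3:ℂ)•(M + M^2 + M^3) := by
      simp only [mul_add, add_mul, smul_mul_assoc, mul_smul_comm, smul_smul,
        q1, q2, q3, q4, q5, q6, q7, q8, q9]
      match_scalars <;>
        first
          | ring1
          | linear_combination om * om_cube
          | linear_combination 2 * om_cube
          | linear_combination (2*om) * om_cube
          | linear_combination om_cube
    rw [smul_mul_assoc, mul_smul_comm, smul_smul, expand, smul_smul]
    norm_num
  have hfom : ((3⁻¹:ℂ)•(om^2•M + om•M^2 + M^3)) * ((3⁻¹:ℂ)•(om^2•M + om•M^2 + M^3))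
      = (3⁻¹:ℂ)•(om^2•M + om•M^2 + M^3) := by
    have expand : (om^2•M + om•M^2 + M^3) * (om^2•M + om•M^2 + M^3)
        = (3:ℂ)•(om^2•M + om•M^2 + M^3) := by
      simp only [mul_add, add_mul, smul_mul_assoc, mul_smul_comm, smul_smul,
        q1, q2, q3, q4, q5, q6, q7, q8, q9]
      match_scalars <;>
        first
          | ring1
          | linear_combination om * om_cube
          | linear_combination 2 * om_cube
          | linear_combination (2*om) * om_cube
          | linear_combination om_cube
    rw [smul_mul_assoc, mul_smul_comm, smul_smul, expand, smul_smul]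
    norm_num
  obtain ⟨a, ha, -⟩ := trace_idem _ hf1
  obtain ⟨b, hb, -⟩ := trace_idem _ hfom
  rw [Matrix.trace_smul, Matrix.trace_add, Matrix.trace_add, trM, trM2, trM3, smul_eq_mul] at ha
  rw [Matrix.trace_smul, Matrix.trace_add, Matrix.trace_add, Matrix.trace_smul,
    Matrix.trace_smul, trM, trM2, trM3, smul_eq_mul, smul_eq_mul, smul_eq_mul] at hb
  -- ha : 3⁻¹ * (U.trace + U.trace + m0) = a
  -- hb : 3⁻¹ * (om^2 * U.trace + om * U.trace + m0) = b
  rw [smul_eq_mul] at hm0 hm1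
  have e1 : (n:ℂ) + 3*T1.trace = 4*m0 := by linear_combination 4 * hm0
  have e2 : (n:ℂ) - T1.trace = 4*m1 := by linear_combination 4 * hm1
  have hnm : (n:ℂ) = m0 + 3*m1 := by linear_combination (1/4)*e1 + (3/4)*e2
  have hnm' : n = m0 + 3*m1 := by exact_mod_cast hnm
  have ea : 2*U.trace + (m0:ℂ) = 3*a := by linear_combination 3 * ha
  have eb : (m0:ℂ) - U.trace = 3*b := by
    have hsum := om_sum
    linear_combination 3 * hb - U.trace * hsum
  have ec : (m0:ℂ) = a + 2*b := by linear_combination (1/3)*ea + (2/3)*eb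
  have ec' : m0 = a + 2*b := by exact_mod_cast ec
  have hb0 : b = 0 := by omega
  refine ⟨m0, m1, hnm', hm1ne, ?_⟩
  rw [hb0] at eb
  push_cast at eb
  linear_combination -eb


private lemma gy_eq : gx * gz = gx * gz := rfl

/-- `A₆` admits no faithful complex representation of dimension at most 4. -/
theorem A6_no_faithful_rep_dim_le_four (n : ℕ) (hn : n ≤ 4)
    (ρ : alternatingGroup (Fin 6) →* GL (Fin n) ℂ) :
    ¬ Function.Injective ρ := by
  intro hinj
  set r : G6 →* Matrix (Fin n) (Fin n) ℂ :=
    (Units.coeHom (Matrix (Fin n) (Fin n) ℂ)).comp ρ with hrdef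
  have rinj : ∀ a b : G6, r a = r b → a = b := by
    intro a b h
    exact hinj (Units.ext h)
  have conjtr : ∀ g v w : G6, g * v * g⁻¹ = w → (r w).trace = (r v).trace := by
    intro g v w h
    rw [← h, _root_.map_mul, _root_.map_mul, Matrix.trace_mul_comm, ← mul_assoc, ← _root_.map_mul,
      inv_mul_cancel, _root_.map_one, one_mul]
  set gy : G6 := gx * gz with hgydef
  -- matrix versions of group identities, application 1 (the standard A4 on {0,1,2,3})
  have rone : ∀ a b : G6, a * b = 1 → r a * r b = 1 := by
    intro a b h; rw [← _root_.map_mul, h, _root_.map_one]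
  have req : ∀ a b c d : G6, a * b = c * d → r a * r b = r c * r d := by
    intro a b c d h; rw [← _root_.map_mul, ← _root_.map_mul, h]
  have reqe : ∀ a b c : G6, a * b = c → r a * r b = r c := by
    intro a b c h; rw [← _root_.map_mul, h]
  -- nontriviality
  have hT1ne : r gt1 ≠ 1 := by
    intro h
    have : gt1 = (1:G6) := rinj _ _ (by rw [h, _root_.map_one])
    have := congrArg Subtype.val this
    revert this; decide
  have hS1ne : r gs1 ≠ 1 := by
    intro h
    have : gs1 = (1:G6) := rinj _ _ (by rw [h, _root_.map_one])
    have := congrArg Subtype.val this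
    revert this; decide
  -- apply the A4 lemma for x with Klein group t1 t2 t3
  obtain ⟨m0, m1, hnm, hm1ne, htx⟩ :=
    A4trace hn (r gx) (r gt1) (r gt2) (r gt3)
      (rone _ _ (Subtype.ext (by decide))) (rone _ _ (Subtype.ext (by decide)))
      (rone _ _ (Subtype.ext (by decide)))
      (reqe _ _ _ (Subtype.ext (by decide))) (reqe _ _ _ (Subtype.ext (by decide)))
      (reqe _ _ _ (Subtype.ext (by decide))) (reqe _ _ _ (Subtype.ext (by decide)))
      (reqe _ _ _ (Subtype.ext (by decide))) (reqe _ _ _ (Subtype.ext (by decide)))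
      (by rw [← _root_.map_mul]; exact rone _ _ (Subtype.ext (by decide)))
      (req _ _ _ _ (Subtype.ext (by decide))) (req _ _ _ _ (Subtype.ext (by decide)))
      (req _ _ _ _ (Subtype.ext (by decide)))
      (conjtr (gx*gx) gt1 gt2 (Subtype.ext (by decide)))
      (conjtr gx gt1 gt3 (Subtype.ext (by decide)))
      (by rw [← _root_.map_mul]; exact conjtr wxt1⁻¹ gx (gx*gt1) (Subtype.ext (by decide)))
      (by rw [← _root_.map_mul]; exact conjtr wxt2⁻¹ gx (gx*gt2) (Subtype.ext (by decide)))
      (by rw [← _root_.map_mul]; exact conjtr wxt3⁻¹ gx (gx*gt3) (Subtype.ext (by decide)))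
      (by rw [← _root_.map_mul]; exact conjtr wx2⁻¹ gx (gx*gx) (Subtype.ext (by decide)))
      (by rw [← _root_.map_mul, ← _root_.map_mul]; exact conjtr wx2t1⁻¹ gx (gx*gx*gt1) (Subtype.ext (by decide)))
      (by rw [← _root_.map_mul, ← _root_.map_mul]; exact conjtr wx2t2⁻¹ gx (gx*gx*gt2) (Subtype.ext (by decide)))
      (by rw [← _root_.map_mul, ← _root_.map_mul]; exact conjtr wx2t3⁻¹ gx (gx*gx*gt3) (Subtype.ext (by decide)))
      hT1ne
  -- apply the A4 lemma for y = (012)(345) with Klein group s1 s3 s2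
  obtain ⟨m0', m1', hnm', hm1ne', hty⟩ :=
    A4trace hn (r gy) (r gs1) (r gs3) (r gs2)
      (rone _ _ (Subtype.ext (by decide))) (rone _ _ (Subtype.ext (by decide)))
      (rone _ _ (Subtype.ext (by decide)))
      (reqe _ _ _ (Subtype.ext (by decide))) (reqe _ _ _ (Subtype.ext (by decide)))
      (reqe _ _ _ (Subtype.ext (by decide))) (reqe _ _ _ (Subtype.ext (by decide)))
      (reqe _ _ _ (Subtype.ext (by decide))) (reqe _ _ _ (Subtype.ext (by decide)))
      (by rw [← _root_.map_mul]; exact rone _ _ (Subtype.ext (by decide)))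
      (req _ _ _ _ (Subtype.ext (by decide))) (req _ _ _ _ (Subtype.ext (by decide)))
      (req _ _ _ _ (Subtype.ext (by decide)))
      (conjtr (gy*gy) gs1 gs3 (Subtype.ext (by decide)))
      (conjtr gy gs1 gs2 (Subtype.ext (by decide)))
      (by rw [← _root_.map_mul]; exact conjtr wys1⁻¹ gy (gy*gs1) (Subtype.ext (by decide)))
      (by rw [← _root_.map_mul]; exact conjtr wys3⁻¹ gy (gy*gs3) (Subtype.ext (by decide)))
      (by rw [← _root_.map_mul]; exact conjtr wys2⁻¹ gy (gy*gs2) (Subtype.ext (by decide)))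
      (by rw [← _root_.map_mul]; exact conjtr wy2⁻¹ gy (gy*gy) (Subtype.ext (by decide)))
      (by rw [← _root_.map_mul, ← _root_.map_mul]; exact conjtr wy2s1⁻¹ gy (gy*gy*gs1) (Subtype.ext (by decide)))
      (by rw [← _root_.map_mul, ← _root_.map_mul]; exact conjtr wy2s3⁻¹ gy (gy*gy*gs3) (Subtype.ext (by decide)))
      (by rw [← _root_.map_mul, ← _root_.map_mul]; exact conjtr wy2s2⁻¹ gy (gy*gy*gs2) (Subtype.ext (by decide)))
      hS1ne
  have hm0eq : m0' = m0 := by omega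
  -- traces of the elements of the Sylow 3-subgroup
  have tx : (r gx).trace = (m0:ℂ) := htx
  have tx2 : (r (gx*gx)).trace = (m0:ℂ) := by
    rw [conjtr wx2⁻¹ gx (gx*gx) (Subtype.ext (by decide))]; exact htx
  have tz : (r gz).trace = (m0:ℂ) := by
    rw [conjtr wz⁻¹ gx gz (Subtype.ext (by decide))]; exact htx
  have tz2 : (r (gz*gz)).trace = (m0:ℂ) := by
    rw [conjtr wz2⁻¹ gx (gz*gz) (Subtype.ext (by decide))]; exact htx
  have txz : (r (gx*gz)).trace = (m0:ℂ) := by rw [← hgydef, hty, hm0eq]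
  have txz2 : (r (gx*(gz*gz))).trace = (m0:ℂ) := by
    rw [conjtr wxz2⁻¹ gy (gx*(gz*gz)) (Subtype.ext (by decide)), hty, hm0eq]
  have tx2z : (r ((gx*gx)*gz)).trace = (m0:ℂ) := by
    rw [conjtr wx2z⁻¹ gy ((gx*gx)*gz) (Subtype.ext (by decide)), hty, hm0eq]
  have tx2z2 : (r ((gx*gx)*(gz*gz))).trace = (m0:ℂ) := by
    rw [conjtr wx2z2⁻¹ gy ((gx*gx)*(gz*gz)) (Subtype.ext (by decide)), hty, hm0eq]
  -- the averaging idempotent over the Sylow 3-subgroup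
  set Sx : Matrix (Fin n) (Fin n) ℂ := 1 + r gx + r (gx*gx) with hSxdef
  set Sz : Matrix (Fin n) (Fin n) ℂ := 1 + r gz + r (gz*gz) with hSzdef
  have ex1 : r gx * r gx = r (gx*gx) := (_root_.map_mul r gx gx).symm
  have ex2 : r gx * r (gx*gx) = 1 := rone _ _ (Subtype.ext (by decide))
  have ex3 : r (gx*gx) * r gx = 1 := rone _ _ (Subtype.ext (by decide))
  have ex4 : r (gx*gx) * r (gx*gx) = r gx := reqe _ _ _ (Subtype.ext (by decide))
  have ez1 : r gz * r gz = r (gz*gz) := (_root_.map_mul r gz gz).symm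
  have ez2 : r gz * r (gz*gz) = 1 := rone _ _ (Subtype.ext (by decide))
  have ez3 : r (gz*gz) * r gz = 1 := rone _ _ (Subtype.ext (by decide))
  have ez4 : r (gz*gz) * r (gz*gz) = r gz := reqe _ _ _ (Subtype.ext (by decide))
  have hSxSx : Sx * Sx = (3:ℂ) • Sx := by
    rw [hSxdef]
    simp only [mul_add, add_mul, one_mul, mul_one, ex1, ex2, ex3, ex4]
    module
  have hSzSz : Sz * Sz = (3:ℂ) • Sz := by
    rw [hSzdef]
    simp only [mul_add, add_mul, one_mul, mul_one, ez1, ez2, ez3, ez4]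
    module
  have czx1 : r gz * r gx = r gx * r gz := req _ _ _ _ (Subtype.ext (by decide))
  have czx2 : r gz * r (gx*gx) = r (gx*gx) * r gz := req _ _ _ _ (Subtype.ext (by decide))
  have czx3 : r (gz*gz) * r gx = r gx * r (gz*gz) := req _ _ _ _ (Subtype.ext (by decide))
  have czx4 : r (gz*gz) * r (gx*gx) = r (gx*gx) * r (gz*gz) :=
    req _ _ _ _ (Subtype.ext (by decide))
  have hzx : Sz * Sx = Sx * Sz := by
    rw [hSxdef, hSzdef]
    simp only [mul_add, add_mul, one_mul, mul_one, czx1, czx2, czx3, czx4]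
    abel
  have keySP : (Sx*Sz) * (Sx*Sz) = (9:ℂ) • (Sx*Sz) := by
    calc (Sx*Sz) * (Sx*Sz) = Sx*((Sz*Sx)*Sz) := by noncomm_ring
    _ = Sx*((Sx*Sz)*Sz) := by rw [hzx]
    _ = (Sx*Sx)*(Sz*Sz) := by noncomm_ring
    _ = ((3:ℂ)•Sx)*((3:ℂ)•Sz) := by rw [hSxSx, hSzSz]
    _ = (9:ℂ)•(Sx*Sz) := by
        rw [smul_mul_assoc, mul_smul_comm, smul_smul]
        norm_num
  have hQ : ((9⁻¹:ℂ) • (Sx*Sz)) * ((9⁻¹:ℂ) • (Sx*Sz)) = (9⁻¹:ℂ) • (Sx*Sz) := by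
    rw [smul_mul_assoc, mul_smul_comm, smul_smul, keySP, smul_smul]
    norm_num
  have trace_one' : (1 : Matrix (Fin n) (Fin n) ℂ).trace = n := by
    simp [Matrix.trace_one]
  have hSP : (Sx*Sz).trace = (n:ℂ) + 8*m0 := by
    rw [hSxdef, hSzdef]
    simp only [mul_add, add_mul, one_mul, mul_one, ← _root_.map_mul]
    simp only [Matrix.trace_add, trace_one', tx, tx2, tz, tz2, txz, txz2, tx2z, tx2z2]
    ring
  obtain ⟨k, hk, -⟩ := trace_idem _ hQ
  rw [Matrix.trace_smul, hSP, smul_eq_mul] at hk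
  have hk' : (n:ℂ) + 8*m0 = 9*k := by linear_combination 9*hk
  have hk'' : n + 8*m0 = 9*k := by exact_mod_cast hk'
  omega
end

section
/- If S₆ acts transitively on a set Ω with |Ω| ≤ 16, then |Ω| ∈ {1, 2, 6, 12, 10, 15}. -/
open Equiv Equiv.Perm Subgroup

lemma cycleType_of_orderOf_five {b : Perm (Fin 6)} (hb : orderOf b = 5) :
    b.cycleType = {5} := by
  have hmem : ∀ n ∈ b.cycleType, n = 5 := by
    intro n hn
    have h1 : n ∣ 5 := hb ▸ b.lcm_cycleType ▸ Multiset.dvd_lcm hn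
    have h2 : 2 ≤ n := two_le_of_mem_cycleType hn
    have h3 : n ≤ 5 := Nat.le_of_dvd (by norm_num) h1
    interval_cases n <;> revert h1 <;> decide
  have hne : b.cycleType ≠ 0 := by
    intro h
    rw [cycleType_eq_zero] at h
    rw [h, orderOf_one] at hb; omega
  have hsum : b.cycleType.sum ≤ 6 := by
    rw [sum_cycleType]
    simpa using Finset.card_le_univ b.support
  have hrep := Multiset.eq_replicate_of_mem hmem
  have hcard : Multiset.card b.cycleType = 1 := by
    by_contra h
    have h1 : 1 ≤ Multiset.card b.cycleType := by
      rwa [Nat.one_le_iff_ne_zero, Ne, Multiset.card_eq_zero]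
    have h2 : 2 ≤ Multiset.card b.cycleType := by omega
    rw [hrep, Multiset.sum_replicate, smul_eq_mul] at hsum
    omega
  rw [hrep, hcard, Multiset.replicate_one]

lemma centralizer_of_orderOf_five {b : Perm (Fin 6)} (hb : orderOf b = 5) :
    Subgroup.centralizer {b} = Subgroup.zpowers b := by
  have hct := cycleType_of_orderOf_five hb
  have hcyc : b.IsCycle := by
    rw [← card_cycleType_eq_one, hct]; rfl
  have hsupp : b.support.card = 5 := by
    rw [← sum_cycleType, hct]; rfl
  have hcompl : b.supportᶜ.card = 1 := by
    rw [Finset.card_compl, hsupp]; rfl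
  obtain ⟨a, ha⟩ := Finset.card_eq_one.mp hcompl
  have hafix : b a = a := by
    have : a ∈ b.supportᶜ := ha ▸ Finset.mem_singleton_self a
    simpa [Equiv.Perm.mem_support] using this
  apply le_antisymm
  · intro g hg
    rw [Subgroup.mem_centralizer_singleton_iff] at hg
    have hcomm : ∀ (k : ℕ) (x : Fin 6), g ((b ^ k) x) = (b ^ k) (g x) := by
      intro k x
      have := congrArg (fun p => p x) (Commute.pow_right hg k)
      simpa [Equiv.Perm.mul_apply] using this
    have hgfix : g a = a := by
      have h1 : b (g a) = g a := by
        have := congrArg (fun p => p a) hg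
        simp only [Equiv.Perm.mul_apply] at this
        rw [← this, hafix]
      have : g a ∉ b.support := fun hmem => (Equiv.Perm.mem_support.mp hmem) h1
      have : g a ∈ b.supportᶜ := Finset.mem_compl.mpr this
      rw [ha, Finset.mem_singleton] at this
      exact this
    obtain ⟨y, hy⟩ : ∃ y, y ∈ b.support := by
      have : b.support.Nonempty := Finset.card_pos.mp (by omega)
      exact this
    have hy' : b y ≠ y := Equiv.Perm.mem_support.mp hy
    have hgy : b (g y) ≠ g y := by
      intro h1
      apply hy'
      have h2 := hcomm 1 y
      simp only [pow_one] at h2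
      -- g (b y) = b (g y) = g y → b y = y
      apply g.injective
      rw [h2, h1]
    obtain ⟨i, hi⟩ := hcyc.exists_pow_eq hy' hgy
    have : g = b ^ i := by
      ext x
      by_cases hx : x ∈ b.support
      · obtain ⟨k, hk⟩ := hcyc.exists_pow_eq hy' (Equiv.Perm.mem_support.mp hx)
        rw [← hk, hcomm k y, ← hi]
        have := congrArg (fun p => p y) (pow_mul_comm b k i)
        simpa [Equiv.Perm.mul_apply] using congrArg Fin.val this
      · have : x = a := by
          have : x ∈ b.supportᶜ := Finset.mem_compl.mpr hx
          rwa [ha, Finset.mem_singleton] at this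
        subst this
        rw [hgfix, pow_apply_eq_self_of_apply_eq_self hafix]
    rw [this]
    exact zpow_mem (Subgroup.mem_zpowers b) i
  · rw [Subgroup.zpowers_le]
    exact Subgroup.mem_centralizer_singleton_iff.mpr rfl

lemma card_normalizer_dvd_twenty {b : Perm (Fin 6)} (hb : orderOf b = 5) :
    Nat.card (Subgroup.normalizer (Subgroup.zpowers b : Set (Perm (Fin 6)))) ∣ 20 := by
  set P := Subgroup.zpowers b with hP
  have hcardP : Nat.card P = 5 := by rw [hP, Nat.card_zpowers, hb]
  haveI : Fact (Nat.Prime 5) := ⟨by norm_num⟩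
  haveI : IsCyclic ↥P := isCyclic_of_prime_card hcardP
  set φ := P.normalizerMonoidHom with hφ
  have h1 : Nat.card φ.ker * φ.ker.index = Nat.card (Subgroup.normalizer (P : Set (Perm (Fin 6)))) :=
    Subgroup.card_mul_index _
  have h2 : φ.ker.index = Nat.card φ.range := Subgroup.index_ker φ
  have hker : Nat.card φ.ker ∣ 5 := by
    rw [Subgroup.normalizerMonoidHom_ker]
    rw [← Subgroup.inf_subgroupOf_right (Subgroup.centralizer (P : Set (Perm (Fin 6)))) (Subgroup.normalizer (P : Set (Perm (Fin 6))))]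
    rw [Nat.card_congr (Subgroup.subgroupOfEquivOfLe inf_le_right).toEquiv]
    have hle : Subgroup.centralizer (P : Set (Perm (Fin 6))) ⊓ (Subgroup.normalizer (P : Set (Perm (Fin 6)))) ≤
        Subgroup.centralizer {b} := by
      refine le_trans inf_le_left (Subgroup.centralizer_le ?_)
      simp [hP, Subgroup.mem_zpowers]
    calc Nat.card ↥(Subgroup.centralizer (P : Set (Perm (Fin 6))) ⊓ (Subgroup.normalizer (P : Set (Perm (Fin 6)))))
        ∣ Nat.card (Subgroup.centralizer {b}) := Subgroup.card_dvd_of_le hle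
      _ = 5 := by rw [centralizer_of_orderOf_five hb, Nat.card_zpowers, hb]
  have hrange : Nat.card φ.range ∣ 4 := by
    have h3 : Nat.card (MulAut ↥P) = 4 := by
      rw [IsCyclic.card_mulAut, hcardP]
      decide
    exact h3 ▸ Subgroup.card_subgroup_dvd_card φ.range
  calc Nat.card (Subgroup.normalizer (P : Set (Perm (Fin 6)))) = Nat.card φ.ker * Nat.card φ.range := by rw [← h1, h2]
    _ ∣ 5 * 4 := mul_dvd_mul hker hrange

lemma sylow_count (K : Subgroup (Perm (Fin 6))) (h5 : 5 ∣ Nat.card K)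
    (h25 : ¬ 25 ∣ Nat.card K) :
    ∃ nN n5 : ℕ, nN ∣ 20 ∧ 5 ∣ nN ∧ nN * n5 = Nat.card K ∧ n5 % 5 = 1 := by
  haveI : Fact (Nat.Prime 5) := ⟨by norm_num⟩
  obtain ⟨Q⟩ : Nonempty (Sylow 5 ↥K) := Sylow.nonempty
  have hQcard : Nat.card (Q : Subgroup ↥K) = 5 := by
    obtain ⟨n, hn⟩ := IsPGroup.iff_card.mp Q.isPGroup'
    have hdvd : Nat.card (Q : Subgroup ↥K) ∣ Nat.card K :=
      Subgroup.card_subgroup_dvd_card _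
    have h5Q : 5 ∣ Nat.card (Q : Subgroup ↥K) := Q.dvd_card_of_dvd_card h5
    rw [hn] at hdvd h5Q ⊢
    have hn1 : 1 ≤ n := by
      by_contra h
      interval_cases n
      · simp at h5Q
    have hn2 : n < 2 := by
      by_contra h
      push_neg at h
      exact h25 (dvd_trans (pow_dvd_pow 5 h) hdvd)
    have : n = 1 := by omega
    rw [this, pow_one]
  set N := Subgroup.normalizer ((Q : Subgroup ↥K) : Set ↥K) with hN
  have hmod : Nat.card (Sylow 5 ↥K) % 5 = 1 := card_sylow_modEq_one 5 ↥K
  have hidx : Nat.card (Sylow 5 ↥K) = N.index := Q.card_eq_index_normalizer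
  have hNmul : Nat.card N * N.index = Nat.card K := Subgroup.card_mul_index N
  have h5N : 5 ∣ Nat.card N :=
    hQcard ▸ Subgroup.card_dvd_of_le Subgroup.le_normalizer
  -- the image of Q in S6
  set P' := (Q : Subgroup ↥K).map K.subtype with hP'
  have hcardP' : Nat.card P' = 5 := by
    rw [← hQcard]
    exact (Nat.card_congr (Subgroup.equivMapOfInjective _ _ K.subtype_injective).toEquiv).symm
  haveI : IsCyclic ↥P' := isCyclic_of_prime_card hcardP'
  obtain ⟨g0, hg0⟩ := IsCyclic.exists_generator (α := ↥P')
  set b : Perm (Fin 6) := (g0 : Perm (Fin 6)) with hbdef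
  have hbP : Subgroup.zpowers b = P' := by
    apply le_antisymm
    · rw [Subgroup.zpowers_le]; exact g0.2
    · intro x hx
      obtain ⟨k, hk⟩ := hg0 ⟨x, hx⟩
      have : ((g0 : ↥P') ^ k : ↥P') = ⟨x, hx⟩ := hk
      have := congrArg (Subtype.val) this
      simp only [SubgroupClass.coe_zpow] at this
      exact this ▸ zpow_mem (Subgroup.mem_zpowers b) k
  have hb : orderOf b = 5 := by
    rw [← Nat.card_zpowers, hbP, hcardP']
  have hmaple : N.map K.subtype ≤ Subgroup.normalizer (Subgroup.zpowers b : Set (Perm (Fin 6))) := by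
    rintro x ⟨y, hyN, rfl⟩
    rw [Subgroup.mem_normalizer_iff]
    intro s
    rw [hbP]
    constructor
    · rintro ⟨q, hq, rfl⟩
      refine ⟨y * q * y⁻¹, (Subgroup.mem_normalizer_iff.mp hyN q).mp hq, ?_⟩
      simp [hP']
    · rintro hmem
      obtain ⟨q', hq', he⟩ := hmem
      have hy' : y⁻¹ * q' * y ∈ (Q : Subgroup ↥K) := by
        have := (Subgroup.mem_normalizer_iff.mp hyN (y⁻¹ * q' * y)).mpr
        apply this
        have : y * (y⁻¹ * q' * y) * y⁻¹ = q' := by group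
        rw [this]; exact hq'
      refine ⟨y⁻¹ * q' * y, hy', ?_⟩
      simp only [map_mul, map_inv, he]
      group
  have hcardN : Nat.card N = Nat.card (N.map K.subtype) :=
    Nat.card_congr (Subgroup.equivMapOfInjective _ _ K.subtype_injective).toEquiv
  have hN20 : Nat.card N ∣ 20 := by
    rw [hcardN]
    exact dvd_trans (Subgroup.card_dvd_of_le hmaple) (card_normalizer_dvd_twenty hb)
  exact ⟨Nat.card N, N.index, hN20, h5N, hNmul, hidx ▸ hmod⟩

lemma card_perm6 : Nat.card (Perm (Fin 6)) = 720 := by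
  rw [Nat.card_eq_fintype_card, Fintype.card_perm, Fintype.card_fin]
  norm_num [Nat.factorial]

lemma index_alternating : (alternatingGroup (Fin 6)).index = 2 := by
  have h1 : alternatingGroup (Fin 6) = (Equiv.Perm.sign (α := Fin 6)).ker := rfl
  rw [h1, Subgroup.index_ker]
  have h2 : (Equiv.Perm.sign (α := Fin 6)).range = ⊤ :=
    MonoidHom.range_eq_top.mpr (Equiv.Perm.sign_surjective (Fin 6))
  rw [h2, Subgroup.card_top, Nat.card_eq_fintype_card]
  decide

lemma no_index_three_four_five (H : Subgroup (Perm (Fin 6)))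
    (h3 : 3 ≤ H.index) (h5 : H.index ≤ 5) : False := by
  set K := H.normalCore with hK
  have hKnormal : K.Normal := H.normalCore_normal
  have hKle : K ≤ H := H.normalCore_le
  have hKdvd : K.index ∣ 120 := by
    haveI : DecidableEq (Perm (Fin 6) ⧸ H) := Classical.decEq _
    haveI : Fintype (Perm (Fin 6) ⧸ H) := Fintype.ofFinite _
    have h1 : K.index = Nat.card (MulAction.toPermHom (Perm (Fin 6)) (Perm (Fin 6) ⧸ H)).range := by
      rw [hK, Subgroup.normalCore_eq_ker, Subgroup.index_ker]
    have h2 : Nat.card (MulAction.toPermHom (Perm (Fin 6)) (Perm (Fin 6) ⧸ H)).range ∣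
        Nat.card (Perm (Perm (Fin 6) ⧸ H)) := Subgroup.card_subgroup_dvd_card _
    have h3' : Nat.card (Perm (Perm (Fin 6) ⧸ H)) = Nat.factorial H.index := by
      rw [Nat.card_eq_fintype_card, Fintype.card_perm, Subgroup.index_eq_card,
        Nat.card_eq_fintype_card]
    have h4 : Nat.factorial H.index ∣ 120 := by
      have : Nat.factorial H.index ∣ Nat.factorial 5 := Nat.factorial_dvd_factorial h5
      simpa [Nat.factorial] using this
    rw [h1]
    exact dvd_trans (h3' ▸ h2) h4
  have hmul : Nat.card K * K.index = 720 := by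
    rw [Subgroup.card_mul_index, card_perm6]
  have h3K : 3 ∣ Nat.card K := by
    by_contra hnd
    have hcop : Nat.Coprime 9 (Nat.card K) := by
      have : Nat.Coprime 3 (Nat.card K) :=
        (Nat.Prime.coprime_iff_not_dvd (by norm_num)).mpr hnd
      simpa using Nat.Coprime.pow_left 2 this
    have h9 : (9 : ℕ) ∣ Nat.card K * K.index := by rw [hmul]; norm_num
    have := hcop.dvd_of_dvd_mul_left h9
    have h120 : (9 : ℕ) ∣ 120 := dvd_trans this hKdvd
    norm_num at h120
  haveI : Fact (Nat.Prime 3) := ⟨by norm_num⟩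
  obtain ⟨z0, hz0⟩ := exists_prime_orderOf_dvd_card' (G := ↥K) 3 h3K
  set z : Perm (Fin 6) := (z0 : Perm (Fin 6)) with hz
  have hzK : z ∈ K := z0.2
  have hzord : orderOf z = 3 := by
    rw [hz, ← hz0]
    exact orderOf_injective K.subtype K.subtype_injective z0
  have hmem : ∀ n ∈ z.cycleType, n = 3 := by
    intro n hn
    have h1 : n ∣ 3 := hzord ▸ z.lcm_cycleType ▸ Multiset.dvd_lcm hn
    have h2 : 2 ≤ n := two_le_of_mem_cycleType hn
    have h3 : n ≤ 3 := Nat.le_of_dvd (by norm_num) h1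
    interval_cases n
    · exfalso; revert h1; decide
    · rfl
  have hrep := Multiset.eq_replicate_of_mem hmem
  have hsum : z.cycleType.sum ≤ 6 := by
    rw [sum_cycleType]; simpa using Finset.card_le_univ z.support
  have hne : z.cycleType ≠ 0 := by
    intro h
    rw [cycleType_eq_zero] at h
    rw [h, orderOf_one] at hzord; omega
  have hcard12 : Multiset.card z.cycleType = 1 ∨ Multiset.card z.cycleType = 2 := by
    rw [hrep, Multiset.sum_replicate, smul_eq_mul] at hsum
    have h1 : Multiset.card z.cycleType ≠ 0 := by
      rw [Ne, Multiset.card_eq_zero]; exact hne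
    omega
  have hthree : ∀ t : Perm (Fin 6), t.IsThreeCycle → t ∈ K := by
    intro t ht
    rcases hcard12 with hc | hc
    · have hzct : z.cycleType = {3} := by rw [hrep, hc, Multiset.replicate_one]
      have hconj : IsConj z t := by
        rw [isConj_iff_cycleType_eq, hzct, ht.cycleType]
      obtain ⟨c, hc'⟩ := isConj_iff.mp hconj
      rw [← hc']
      exact hKnormal.conj_mem z hzK c
    · have hzct : z.cycleType = {3, 3} := by
        rw [hrep, hc]; rfl
      have hsc : t.support.card = 3 := ht.card_support
      have hscc : t.supportᶜ.card = 3 := by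
        rw [Finset.card_compl, hsc]; rfl
      obtain ⟨p, q, r, hpq, hpr, hqr, hset⟩ := Finset.card_eq_three.mp hscc
      set c1 : Perm (Fin 6) := Equiv.swap p q * Equiv.swap q r with hc1
      have hc1three : c1.IsThreeCycle := by
        rw [hc1, Equiv.swap_comm p q]
        exact isThreeCycle_swap_mul_swap_same hpq.symm hqr hpr
      have hc1supp : c1.support = t.supportᶜ := by
        rw [hc1, support_swap_mul_swap (by simp [hpq, hpr, hqr]), hset]
      have hdisj : t.Disjoint c1 := by
        rw [disjoint_iff_disjoint_support, hc1supp]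
        exact disjoint_compl_right
      have hdisj1 : c1.Disjoint t⁻¹ := by
        rw [disjoint_iff_disjoint_support, support_inv, hc1supp]
        exact disjoint_compl_left
      have hdisj2 : (c1⁻¹).Disjoint t⁻¹ := by
        rw [disjoint_iff_disjoint_support, support_inv, support_inv, hc1supp]
        exact disjoint_compl_left
      set u := c1 * t⁻¹ with hu
      set v := c1⁻¹ * t⁻¹ with hv
      have hut : u.cycleType = {3, 3} := by
        rw [hu, hdisj1.cycleType_mul, hc1three.cycleType, cycleType_inv, ht.cycleType]
        rfl
      have hvt : v.cycleType = {3, 3} := by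
        rw [hv, hdisj2.cycleType_mul, hc1three.inv.cycleType, cycleType_inv, ht.cycleType]
        rfl
      have huK : u ∈ K := by
        have hconj : IsConj z u := by rw [isConj_iff_cycleType_eq, hzct, hut]
        obtain ⟨c, hc'⟩ := isConj_iff.mp hconj
        rw [← hc']; exact hKnormal.conj_mem z hzK c
      have hvK : v ∈ K := by
        have hconj : IsConj z v := by rw [isConj_iff_cycleType_eq, hzct, hvt]
        obtain ⟨c, hc'⟩ := isConj_iff.mp hconj
        rw [← hc']; exact hKnormal.conj_mem z hzK c
      have huv : u * v = t := by
        have hcomm : t⁻¹ * c1⁻¹ = c1⁻¹ * t⁻¹ := (hdisj2.commute).symm.eq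
        have ht3 : t ^ 3 = 1 := by
          rw [← ht.orderOf]; exact pow_orderOf_eq_one t
        calc u * v = c1 * (t⁻¹ * c1⁻¹) * t⁻¹ := by
              rw [hu, hv]; group
          _ = c1 * (c1⁻¹ * t⁻¹) * t⁻¹ := by rw [hcomm]
          _ = t⁻¹ * t⁻¹ := by group
          _ = t := by
              have h33 : t * t * t = 1 := by
                rw [show t * t * t = t ^ 3 by rw [pow_succ, pow_succ, pow_one]]
                exact ht3
              rw [← mul_inv_rev, inv_eq_iff_mul_eq_one]
              exact h33
      rw [← huv]
      exact K.mul_mem huK hvK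
  have hA6le : alternatingGroup (Fin 6) ≤ K := by
    rw [← closure_three_cycles_eq_alternating, Subgroup.closure_le]
    intro t ht
    exact hthree t ht
  have hdvd2 : H.index ∣ 2 := by
    calc H.index ∣ K.index := Subgroup.index_dvd_of_le hKle
      _ ∣ (alternatingGroup (Fin 6)).index := Subgroup.index_dvd_of_le hA6le
      _ = 2 := index_alternating
  have := Nat.le_of_dvd (by norm_num) hdvd2
  omega

/-- If `S₆` acts transitively on a finite nonempty set `Ω` with `|Ω| ≤ 16`,
then `|Ω| ∈ {1, 2, 6, 12, 10, 15}`. -/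
theorem S6_transitive_action_card (Ω : Type) [Fintype Ω] [Nonempty Ω]
    [MulAction (Equiv.Perm (Fin 6)) Ω]
    [MulAction.IsPretransitive (Equiv.Perm (Fin 6)) Ω]
    (hcard : Fintype.card Ω ≤ 16) :
    Fintype.card Ω ∈ ({1, 2, 6, 12, 10, 15} : Set ℕ) := by
  obtain ⟨x⟩ := (inferInstance : Nonempty Ω)
  set H := MulAction.stabilizer (Perm (Fin 6)) x with hH
  have hidx : H.index = Fintype.card Ω := by
    rw [hH, MulAction.index_stabilizer_of_transitive, Nat.card_eq_fintype_card]
  have hmul : H.index * Nat.card H = 720 := by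
    rw [Subgroup.index_mul_card, card_perm6]
  set n := Fintype.card Ω with hn
  clear_value n
  have hn1 : 1 ≤ n := hn ▸ Fintype.card_pos
  have hdvd : n ∣ 720 := ⟨Nat.card H, by rw [← hidx, hmul]⟩
  have hA6card : Nat.card (alternatingGroup (Fin 6)) = 360 := by
    have h := Subgroup.card_mul_index (alternatingGroup (Fin 6))
    rw [index_alternating, card_perm6] at h
    omega
  interval_cases n
  -- n = 1
  · norm_num
  · norm_num
  · exact absurd hidx (by intro h; exact no_index_three_four_five H (by omega) (by omega))
  · exact absurd hidx (by intro h; exact no_index_three_four_five H (by omega) (by omega))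
  · exact absurd hidx (by intro h; exact no_index_three_four_five H (by omega) (by omega))
  · norm_num
  · norm_num at hdvd
  · -- n = 8, |H| = 90
    exfalso
    have hcardH : Nat.card H = 90 := by rw [hidx] at hmul; omega
    obtain ⟨nN, n5, h20, h5N, hprod, hmod⟩ :=
      sylow_count H (by rw [hcardH]; norm_num) (by rw [hcardH]; norm_num)
    rw [hcardH] at hprod
    have hpos : 0 < nN := Nat.pos_of_ne_zero (by rintro rfl; simp at hprod)
    have hle : nN ≤ 20 := Nat.le_of_dvd (by norm_num) h20
    interval_cases nN <;> omega
  · -- n = 9, |H| = 80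
    exfalso
    have hcardH : Nat.card H = 80 := by rw [hidx] at hmul; omega
    by_cases hle : H ≤ alternatingGroup (Fin 6)
    · have := Subgroup.card_dvd_of_le hle
      rw [hcardH, hA6card] at this
      norm_num at this
    · have hrel2 : (alternatingGroup (Fin 6)).relIndex H ∣ 2 :=
        index_alternating ▸ Subgroup.relIndex_dvd_index_of_normal _ H
      have hrelne : (alternatingGroup (Fin 6)).relIndex H ≠ 1 := by
        rw [Ne, Subgroup.relIndex_eq_one]
        exact hle
      have hrel : (alternatingGroup (Fin 6)).relIndex H = 2 := by
        rcases (Nat.dvd_prime Nat.prime_two).mp hrel2 with h | h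
        · exact absurd h hrelne
        · exact h
      have hsub : Nat.card ((alternatingGroup (Fin 6)).subgroupOf H) *
          ((alternatingGroup (Fin 6)).subgroupOf H).index = 80 := by
        rw [Subgroup.card_mul_index, hcardH]
      rw [show ((alternatingGroup (Fin 6)).subgroupOf H).index
          = (alternatingGroup (Fin 6)).relIndex H from rfl, hrel] at hsub
      set K : Subgroup (Perm (Fin 6)) := alternatingGroup (Fin 6) ⊓ H with hKdef
      have hKcard : Nat.card K = 40 := by
        have e1 : Nat.card K =
            Nat.card ((alternatingGroup (Fin 6) ⊓ H).subgroupOf H) :=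
          (Nat.card_congr (Subgroup.subgroupOfEquivOfLe inf_le_right).toEquiv).symm
        rw [e1, Subgroup.inf_subgroupOf_right]
        omega
      obtain ⟨nN, n5, h20, h5N, hprod, hmod⟩ :=
        sylow_count K (by rw [hKcard]; norm_num) (by rw [hKcard]; norm_num)
      rw [hKcard] at hprod
      have hpos : 0 < nN := Nat.pos_of_ne_zero (by rintro rfl; simp at hprod)
      have hleN : nN ≤ 20 := Nat.le_of_dvd (by norm_num) h20
      interval_cases nN <;> omega
  · norm_num
  · norm_num at hdvd
  · norm_num
  · norm_num at hdvd
  · norm_num at hdvd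
  · norm_num
  · -- n = 16, |H| = 45
    exfalso
    have hcardH : Nat.card H = 45 := by rw [hidx] at hmul; omega
    obtain ⟨nN, n5, h20, h5N, hprod, hmod⟩ :=
      sylow_count H (by rw [hcardH]; norm_num) (by rw [hcardH]; norm_num)
    rw [hcardH] at hprod
    have hpos : 0 < nN := Nat.pos_of_ne_zero (by rintro rfl; simp at hprod)
    have hle : nN ≤ 20 := Nat.le_of_dvd (by norm_num) h20
    interval_cases nN <;> omega
end

section
/- The symmetric group S₇ contains no subgroup of index 12 and no subgroup of index 15. -/
open Equiv Equiv.Perm Subgroup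


lemma S7_card : Nat.card (Equiv.Perm (Fin 7)) = 5040 := by
  simp [Nat.card_eq_fintype_card, Fintype.card_perm]
  decide

lemma S7_cycle_of_order7 {σ : Equiv.Perm (Fin 7)} (h : orderOf σ = 7) :
    σ.IsCycle ∧ σ.support = Finset.univ := by
  have h7 : (Fintype.card (Fin 7)).Prime := by
    simp only [Fintype.card_fin]; norm_num
  have hc : σ.IsCycle := isCycle_of_prime_order'' h7 (by simpa using h)
  refine ⟨hc, Finset.eq_univ_of_card _ ?_⟩
  rw [← hc.orderOf, h, Fintype.card_fin]

lemma S7_centralizer_order7 {σ : Equiv.Perm (Fin 7)} (h : orderOf σ = 7) :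
    Subgroup.centralizer {σ} = Subgroup.zpowers σ := by
  obtain ⟨hc, hs⟩ := S7_cycle_of_order7 h
  apply le_antisymm
  · intro g hg
    rw [Subgroup.mem_centralizer_iff] at hg
    have hcomm : σ * g = g * σ := hg σ rfl
    have hmem : ∀ a : Fin 7, σ a ≠ a := fun a =>
      Equiv.Perm.mem_support.mp (hs ▸ Finset.mem_univ a)
    have hpow : ∀ m : ℕ, σ ^ m * g = g * σ ^ m := fun m =>
      (Commute.pow_left hcomm m)
    obtain ⟨k, hk⟩ := hc.exists_pow_eq (hmem 0) (hmem (g 0))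
    have hg_eq : g = σ ^ k := by
      apply Equiv.ext; intro i
      obtain ⟨m, hm⟩ := hc.exists_pow_eq (hmem 0) (hmem i)
      calc g i = g ((σ ^ m) 0) := by rw [hm]
        _ = (g * σ ^ m) 0 := rfl
        _ = (σ ^ m * g) 0 := by rw [hpow m]
        _ = (σ ^ m) (g 0) := rfl
        _ = (σ ^ m) ((σ ^ k) 0) := by rw [hk]
        _ = (σ ^ k) ((σ ^ m) 0) := by
              rw [← Equiv.Perm.mul_apply, ← Equiv.Perm.mul_apply, ← pow_add, ← pow_add,
                Nat.add_comm]
        _ = (σ ^ k) i := by rw [hm]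
    rw [hg_eq]
    exact Subgroup.pow_mem _ (Subgroup.mem_zpowers σ) k
  · rintro g ⟨n, rfl⟩
    rw [Subgroup.mem_centralizer_iff]
    rintro x rfl
    exact (Commute.zpow_right (Commute.refl x) n)

lemma S7_normalizer_dvd {P : Subgroup (Equiv.Perm (Fin 7))} (hP : Nat.card P = 7) :
    Nat.card (Subgroup.normalizer (P : Set (Equiv.Perm (Fin 7)))) ∣ 42 := by
  haveI : Fact (Nat.Prime 7) := ⟨by norm_num⟩
  obtain ⟨g, hg⟩ := exists_prime_orderOf_dvd_card' (G := P) 7 (by rw [hP])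
  have hgord : orderOf (g : Equiv.Perm (Fin 7)) = 7 := (Subgroup.orderOf_coe g).trans hg
  have hzle : Subgroup.zpowers (g : Equiv.Perm (Fin 7)) ≤ P := by
    rw [Subgroup.zpowers_le]; exact g.2
  have hPz : P = Subgroup.zpowers (g : Equiv.Perm (Fin 7)) :=
    (Subgroup.eq_of_le_of_card_ge hzle
      (by rw [hP, Nat.card_zpowers, hgord])).symm
  have hcent' : Subgroup.centralizer ((Subgroup.zpowers (g : Equiv.Perm (Fin 7)) : Subgroup _) : Set (Equiv.Perm (Fin 7))) = Subgroup.centralizer {(g : Equiv.Perm (Fin 7))} := by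
    ext x
    simp only [Subgroup.mem_centralizer_iff]
    constructor
    · intro hx y hy
      rw [Set.mem_singleton_iff] at hy; subst hy
      exact hx _ (SetLike.mem_coe.mpr (Subgroup.mem_zpowers _))
    · rintro hx y hy
      rw [SetLike.mem_coe] at hy
      obtain ⟨n, rfl⟩ := hy
      exact Commute.zpow_left (hx _ rfl) n
  have hcent : Subgroup.centralizer (P : Set (Equiv.Perm (Fin 7))) = P := by
    conv_lhs => rw [hPz]
    rw [hcent', S7_centralizer_order7 hgord, ← hPz]
  have hker : P.normalizerMonoidHom.ker = P.subgroupOf (Subgroup.normalizer (P : Set (Equiv.Perm (Fin 7)))) := by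
    rw [Subgroup.normalizerMonoidHom_ker, hcent]
  have hkercard : Nat.card P.normalizerMonoidHom.ker = 7 := by
    rw [hker]
    exact (Nat.card_congr (Subgroup.subgroupOfEquivOfLe Subgroup.le_normalizer).toEquiv).trans hP
  have hcyc : IsCyclic P := isCyclic_of_prime_card hP
  have hAut : Nat.card (MulAut P) = 6 := by
    rw [IsCyclic.card_mulAut, hP]
    decide
  have hq : Nat.card ((Subgroup.normalizer (P : Set (Equiv.Perm (Fin 7)))) ⧸ P.normalizerMonoidHom.ker) ∣ 6 := by
    rw [Nat.card_congr (QuotientGroup.quotientKerEquivRange P.normalizerMonoidHom).toEquiv,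
      ← hAut]
    exact Subgroup.card_subgroup_dvd_card _
  have := Subgroup.card_eq_card_quotient_mul_card_subgroup P.normalizerMonoidHom.ker
  rw [hkercard] at this
  rw [this]
  have : (42 : ℕ) = 6 * 7 := by norm_num
  rw [this]
  exact Nat.mul_dvd_mul hq dvd_rfl

lemma map_normalizer_le {G : Type*} [Group G] (H : Subgroup G) (P : Subgroup H)
    (x : G) (hx : x ∈ Subgroup.map H.subtype (Subgroup.normalizer (P : Set H))) :
    x ∈ (Subgroup.normalizer ((Subgroup.map H.subtype P : Subgroup G) : Set G)) := by
  obtain ⟨h, hh, rfl⟩ := hx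
  have hh' : ∀ b : ↥H, b ∈ P ↔ h * b * h⁻¹ ∈ P := fun b =>
    Subgroup.mem_normalizer_iff.mp (SetLike.mem_coe.mp hh) b
  rw [Subgroup.mem_normalizer_iff]
  intro y
  constructor
  · rintro ⟨p, hp, rfl⟩
    exact ⟨h * p * h⁻¹, SetLike.mem_coe.mpr ((hh' p).mp (SetLike.mem_coe.mp hp)), by simp⟩
  · rintro ⟨q, hq, hq'⟩
    have hy : y = H.subtype (h⁻¹ * q * h) := by
      simp only [map_mul, map_inv]
      rw [hq']
      group
    refine ⟨h⁻¹ * q * h, SetLike.mem_coe.mpr ?_, hy.symm⟩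
    refine (hh' (h⁻¹ * q * h)).mpr ?_
    have he : h * (h⁻¹ * q * h) * h⁻¹ = q := by group
    rw [he]
    exact SetLike.mem_coe.mp hq

/-- `S₇` contains no subgroup of index 12 and no subgroup of index 15. -/
theorem S7_no_subgroup_index_12_or_15 (H : Subgroup (Equiv.Perm (Fin 7))) :
    H.index ≠ 12 ∧ H.index ≠ 15 := by
  constructor
  · intro h12
    have hH : Nat.card H = 420 := by
      have h := H.index_mul_card
      rw [S7_card, h12] at h
      omega
    haveI : Fact (Nat.Prime 7) := ⟨by norm_num⟩
    obtain ⟨P⟩ : Nonempty (Sylow 7 ↥H) := inferInstance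
    have hfact : (Nat.card ↥H).factorization 7 = 1 := by
      rw [hH, show (420 : ℕ) = 7 * 60 by norm_num,
        Nat.factorization_mul (by norm_num) (by norm_num)]
      simp [Nat.Prime.factorization_self (by norm_num : Nat.Prime 7),
        Nat.factorization_eq_zero_of_not_dvd (by norm_num : ¬ (7 ∣ 60))]
    have hPcard : Nat.card (P : Subgroup ↥H) = 7 := by
      rw [P.card_eq_multiplicity, hfact, pow_one]
    -- number of Sylow 7-subgroups
    have hmod : Nat.card (Sylow 7 ↥H) % 7 = 1 % 7 := card_sylow_modEq_one 7 ↥H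
    have hPindex : (P : Subgroup ↥H).index = 60 := by
      have h := (P : Subgroup ↥H).index_mul_card
      rw [hPcard, hH] at h
      omega
    have hdvd : Nat.card (Sylow 7 ↥H) ∣ 60 := hPindex ▸ P.card_dvd_index
    have hn : Nat.card (Sylow 7 ↥H) = 1 ∨ Nat.card (Sylow 7 ↥H) = 15 := by
      have h3 : Nat.card (Sylow 7 ↥H) ≤ 60 := Nat.le_of_dvd (by norm_num) hdvd
      interval_cases (Nat.card (Sylow 7 ↥H)) <;> omega
    -- card of normalizer inside H
    have hnorm : Nat.card (Subgroup.normalizer ((P : Subgroup ↥H) : Set ↥H)) = 420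
        ∨ Nat.card (Subgroup.normalizer ((P : Subgroup ↥H) : Set ↥H)) = 28 := by
      have hidx : Nat.card (Sylow 7 ↥H) = (Subgroup.normalizer ((P : Subgroup ↥H) : Set ↥H)).index :=
        P.card_eq_index_normalizer
      have h := (Subgroup.normalizer ((P : Subgroup ↥H) : Set ↥H)).index_mul_card
      rw [hH, ← hidx] at h
      rcases hn with hn | hn <;> rw [hn] at h <;> omega
    -- push to G
    set Q := Subgroup.map H.subtype (P : Subgroup ↥H) with hQ
    have hQcard : Nat.card Q = 7 :=
      (Nat.card_congr ((P : Subgroup ↥H).equivMapOfInjective H.subtype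
        H.subtype_injective).toEquiv.symm).trans hPcard
    have hNmap : Nat.card (Subgroup.map H.subtype (Subgroup.normalizer ((P : Subgroup ↥H) : Set ↥H)))
        = Nat.card (Subgroup.normalizer ((P : Subgroup ↥H) : Set ↥H)) :=
      Nat.card_congr ((Subgroup.normalizer ((P : Subgroup ↥H) : Set ↥H)).equivMapOfInjective H.subtype
        H.subtype_injective).toEquiv.symm
    have hle : Subgroup.map H.subtype (Subgroup.normalizer ((P : Subgroup ↥H) : Set ↥H)) ≤ (Subgroup.normalizer (Q : Set (Equiv.Perm (Fin 7)))) :=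
      fun x hx => map_normalizer_le H _ x hx
    have hdvd42 : Nat.card (Subgroup.normalizer (Q : Set (Equiv.Perm (Fin 7)))) ∣ 42 := S7_normalizer_dvd hQcard
    have hdvd2 : Nat.card (Subgroup.map H.subtype (Subgroup.normalizer ((P : Subgroup ↥H) : Set ↥H)))
        ∣ Nat.card (Subgroup.normalizer (Q : Set (Equiv.Perm (Fin 7)))) := Subgroup.card_dvd_of_le hle
    rw [hNmap] at hdvd2
    have : Nat.card (Subgroup.normalizer ((P : Subgroup ↥H) : Set ↥H)) ∣ 42 := hdvd2.trans hdvd42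
    rcases hnorm with hn' | hn' <;> rw [hn'] at this <;> omega
  · intro h15
    have hH : Nat.card H = 336 := by
      have h := H.index_mul_card
      rw [S7_card, h15] at h
      omega
    haveI : Fact (Nat.Prime 2) := ⟨by norm_num⟩
    obtain ⟨R⟩ : Nonempty (Sylow 2 ↥H) := inferInstance
    have hfact : (Nat.card ↥H).factorization 2 = 4 := by
      rw [hH, show (336 : ℕ) = 2 ^ 4 * 21 by norm_num,
        Nat.factorization_mul (by norm_num) (by norm_num)]
      rw [Nat.Prime.factorization_pow (by norm_num : Nat.Prime 2), Finsupp.add_apply, Finsupp.single_eq_same,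
        Nat.factorization_eq_zero_of_not_dvd (by norm_num : ¬ (2 ∣ 21))]
    have hRcard : Nat.card (R : Subgroup ↥H) = 16 := by
      rw [R.card_eq_multiplicity, hfact]
      norm_num
    set Q := Subgroup.map H.subtype (R : Subgroup ↥H) with hQdef
    have hQcard : Nat.card Q = 2 ^ ((Nat.card (Equiv.Perm (Fin 7))).factorization 2) := by
      have h1 : Nat.card Q = 16 :=
        (Nat.card_congr ((R : Subgroup ↥H).equivMapOfInjective H.subtype
          H.subtype_injective).toEquiv.symm).trans hRcard
      have h2 : (Nat.card (Equiv.Perm (Fin 7))).factorization 2 = 4 := by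
        rw [S7_card, show (5040 : ℕ) = 2 ^ 4 * 315 by norm_num,
          Nat.factorization_mul (by norm_num) (by norm_num)]
        rw [Nat.Prime.factorization_pow (by norm_num : Nat.Prime 2), Finsupp.add_apply, Finsupp.single_eq_same,
          Nat.factorization_eq_zero_of_not_dvd (by norm_num : ¬ (2 ∣ 315))]
      rw [h1, h2]
      norm_num
    let Q' : Sylow 2 (Equiv.Perm (Fin 7)) := Sylow.ofCard Q hQcard
    -- a swap generates a 2-subgroup
    have hsw : orderOf (Equiv.swap (0 : Fin 7) 1) = 2 := by
      refine orderOf_eq_prime ?_ ?_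
      · rw [pow_two, Equiv.swap_mul_self]
      · exact fun h => absurd (Equiv.ext_iff.mp h 0) (by simp)
    have hpg : IsPGroup 2 (Subgroup.zpowers (Equiv.swap (0 : Fin 7) 1)) :=
      IsPGroup.of_card (by rw [Nat.card_zpowers, hsw, pow_one])
    obtain ⟨S, hS⟩ := hpg.exists_le_sylow
    obtain ⟨g, hg⟩ := MulAction.exists_smul_eq (Equiv.Perm (Fin 7)) S Q'
    have hmem : g * Equiv.swap (0 : Fin 7) 1 * g⁻¹ ∈ Q' := by
      rw [← hg]
      have h1 : Equiv.swap (0 : Fin 7) 1 ∈ (S : Subgroup _) :=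
        hS (Subgroup.mem_zpowers _)
      have h1' : Equiv.swap (0 : Fin 7) 1 ∈ (S : Subgroup (Equiv.Perm (Fin 7))) := h1
      have h2 := Subgroup.smul_mem_pointwise_smul _ (MulAut.conj g)
        (S : Subgroup (Equiv.Perm (Fin 7))) h1'
      show g * Equiv.swap (0 : Fin 7) 1 * g⁻¹ ∈ ((g • S : Sylow 2 _) : Subgroup _)
      rw [Sylow.coe_subgroup_smul]
      simpa using h2
    have hmemH : g * Equiv.swap (0 : Fin 7) 1 * g⁻¹ ∈ H := by
      have : (Q' : Subgroup (Equiv.Perm (Fin 7))) = Q := rfl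
      have hQle : Q ≤ H := Subgroup.map_subtype_le _
      exact hQle (this ▸ hmem)
    have hswap : Equiv.Perm.IsSwap (g * Equiv.swap (0 : Fin 7) 1 * g⁻¹) := by
      exact ⟨g 0, g 1, (Equiv.injective g).ne (by decide),
        (Equiv.swap_apply_apply g 0 1).symm⟩
    classical
    have htop : H = ⊤ := by
      refine Equiv.Perm.subgroup_eq_top_of_swap_mem ?_ ?_ hmemH hswap
      · simp only [Fintype.card_fin]; norm_num
      · rw [← Nat.card_eq_fintype_card, ← Nat.card_eq_fintype_card, hH]
        norm_num
    rw [htop, Subgroup.index_top] at h15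
    omega
end

section
/- Neither S₇ nor its double cover 2.S₇ admits a faithful complex representation of dimension 4; consequently S₇ does not embed into PGL₄(ℂ). -/
open Matrix Finset

private lemma pow_mod_seven {M : Type*} [Monoid M] (x : M) (hx : x ^ 7 = 1) (n : ℕ) :
    x ^ (n % 7) = x ^ n := by
  conv_rhs => rw [← Nat.div_add_mod n 7, pow_add, pow_mul, hx, one_pow, one_mul]

private lemma pow_val_add {M : Type*} [Monoid M] (x : M) (hx : x ^ 7 = 1) (a b : ZMod 7) :
    x ^ ((a + b).val) = x ^ a.val * x ^ b.val := by
  rw [ZMod.val_add, pow_mod_seven x hx, pow_add]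

private lemma pow_val_mul {M : Type*} [Monoid M] (x : M) (hx : x ^ 7 = 1) (a b : ZMod 7) :
    x ^ ((a * b).val) = (x ^ a.val) ^ b.val := by
  rw [ZMod.val_mul, pow_mod_seven x hx, pow_mul]

private def zmodFinEquiv : Fin 7 ≃ ZMod 7 :=
  { toFun := fun i => ((i : ℕ) : ZMod 7)
    invFun := fun j => ⟨j.val, j.val_lt⟩
    left_inv := fun i => by
      ext
      simp [ZMod.val_cast_of_lt i.isLt]
    right_inv := fun j => ZMod.natCast_rightInverse j }

private lemma sum_zmod {M : Type*} [AddCommMonoid M] (g : ZMod 7 → M) :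
    (∑ j : ZMod 7, g j) = ∑ i ∈ Finset.range 7, g ((i : ℕ) : ZMod 7) := by
  rw [← Fin.sum_univ_eq_sum_range (fun i => g ((i : ℕ) : ZMod 7)) 7]
  exact (Fintype.sum_equiv zmodFinEquiv _ g (fun i => rfl)).symm

/-- An idempotent 4×4 complex matrix has natural-number trace, and trace 0 means it is 0. -/
private lemma idem_trace_nat (P : Matrix (Fin 4) (Fin 4) ℂ) (h : P * P = P) :
    ∃ n : ℕ, P.trace = (n : ℂ) ∧ (n = 0 → P = 0) := by
  set f : (Fin 4 → ℂ) →ₗ[ℂ] (Fin 4 → ℂ) := Matrix.toLin' P with hf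
  have hff : f ∘ₗ f = f := by
    rw [hf, ← Matrix.toLin'_mul, h]
  obtain ⟨p, hp⟩ := (LinearMap.isProj_iff_isIdempotentElem f).mpr hff
  have htr : LinearMap.trace ℂ _ f = (Module.finrank ℂ p : ℂ) := hp.trace
  refine ⟨Module.finrank ℂ p, ?_, ?_⟩
  · rw [← htr, hf]
    rw [LinearMap.trace_eq_matrix_trace ℂ (Pi.basisFun ℂ (Fin 4)),
      LinearMap.toMatrix_eq_toMatrix', LinearMap.toMatrix'_toLin']
  · intro hn
    have hbot : p = ⊥ := Submodule.finrank_eq_zero.mp hn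
    have hf0 : f = 0 := LinearMap.ext fun v => by
      have := hp.map_mem v
      rw [hbot, Submodule.mem_bot] at this
      simp [this]
    have : Matrix.toLin' P = Matrix.toLin' (0 : Matrix (Fin 4) (Fin 4) ℂ) := by
      simpa [hf] using hf0
    exact Matrix.toLin'.injective this

private lemma z7fact : (7 : ZMod 7) = 0 := by decide
private lemma m41 : (4:ZMod 7)*1 = 4 := by decide
private lemma m44 : (4:ZMod 7)*4 = 2 := by decide
private lemma m43 : (4:ZMod 7)*3 = 5 := by decide
private lemma m45 : (4:ZMod 7)*5 = 6 := by decide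
private lemma m61 : (6:ZMod 7)*1 + 0 = 6 := by decide
private lemma ne3 : (3:ZMod 7) ≠ 0 := by decide

private lemma zmod_enum (y : ZMod 7) (hy : y ≠ 0) :
    y = 1 ∨ y = 2 ∨ y = 3 ∨ y = 4 ∨ y = 5 ∨ y = 6 := by revert hy; revert y; decide

/-- Combinatorial endgame: a multiplicity function on `ZMod 7` summing to `4` which is
invariant under `j ↦ 4j+b` and `j ↦ 6j+e` is concentrated (with value 4) at one point. -/
private lemma endgame (N : ZMod 7 → ℕ) (b e : ZMod 7)
    (h1 : ∀ j, N j = N (4*j + b)) (h2 : ∀ j, N j = N (6*j + e))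
    (hsum : ∑ j : ZMod 7, N j = 4) :
    ∃ p : ZMod 7, N p = 4 ∧ ∀ j, j ≠ p → N j = 0 := by
  haveI : Fact (Nat.Prime 7) := ⟨by norm_num⟩
  have h7 : (7 : ZMod 7) = 0 := z7fact
  set p : ZMod 7 := 2*b with hp
  set M : ZMod 7 → ℕ := fun x => N (x + p) with hMdef
  have hM1 : ∀ x, M x = M (4*x) := fun x => by
    show N (x + p) = N (4*x + p)
    rw [h1 (x + p)]
    congr 1
    rw [hp]; linear_combination b*h7
  set w : ZMod 7 := 5*p + e with hw
  have hM2 : ∀ x, M x = M (6*x + w) := fun x => by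
    show N (x + p) = N ((6*x + w) + p)
    rw [h2 (x + p)]
    congr 1
    rw [hw]; ring
  have hsumM : ∑ x : ZMod 7, M x = 4 := by
    rw [← hsum]
    exact Fintype.sum_equiv (Equiv.addRight p) M N (fun x => rfl)
  have hNp : N p = M 0 := by show N p = N (0 + p); rw [zero_add]
  have hsumM' : M 0 + (M 1 + (M 2 + (M 3 + (M 4 + (M 5 + M 6))))) = 4 := by
    rw [sum_zmod M] at hsumM
    simp only [Finset.sum_range_succ, Finset.sum_range_zero] at hsumM
    norm_num at hsumM
    omega
  by_cases hw0 : w = 0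
  · -- no twist: orbits are {0} and the six units
    have c1 : M 1 = M 4 := by have := hM1 1; rwa [m41] at this
    have c2 : M 4 = M 2 := by have := hM1 4; rwa [m44] at this
    have c3 : M 3 = M 5 := by have := hM1 3; rwa [m43] at this
    have c4 : M 5 = M 6 := by have := hM1 5; rwa [m45] at this
    have c5 : M 1 = M 6 := by
      have := hM2 1; rwa [hw0, m61] at this
    have key : M 0 = 4 ∧ M 1 = 0 ∧ M 2 = 0 ∧ M 3 = 0 ∧ M 4 = 0 ∧ M 5 = 0 ∧ M 6 = 0 := by
      omega
    refine ⟨p, by rw [hNp]; exact key.1, fun j hj => ?_⟩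
    have hNx : N j = M (j - p) := by show N j = N (j - p + p); rw [sub_add_cancel]
    have hx0 : j - p ≠ 0 := sub_ne_zero.mpr hj
    rcases zmod_enum _ hx0 with h | h | h | h | h | h <;> rw [hNx, h] <;> omega
  · -- twist: the invariance group is transitive, contradiction with total mass 4
    exfalso
    have i1 : ∀ x, M x = M (3*x + w) := fun x => by
      rw [hM1 x, hM2 (4*x)]
      congr 1
      linear_combination (3*x)*h7
    have i2 : ∀ x, M x = M (3*x + 4*w) := fun x => by
      rw [hM2 x, hM1 (6*x + w)]
      congr 1
      linear_combination (3*x)*h7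
    have key : ∀ y, M y = M (y + 3*w) := fun y => by
      have h12 := (i1 (5*(y - w))).symm.trans (i2 (5*(y - w)))
      have e1 : 3*(5*(y - w)) + w = y := by linear_combination (2*(y - w))*h7
      have e2 : 3*(5*(y - w)) + 4*w = y + 3*w := by linear_combination (2*(y - w))*h7
      rwa [e1, e2] at h12
    have h3w : (3:ZMod 7)*w ≠ 0 := mul_ne_zero ne3 hw0
    have iter : ∀ n : ℕ, M 0 = M ((n : ZMod 7) * (3*w)) := by
      intro n
      induction n with
      | zero => simp
      | succ n ih =>
        rw [ih, key ((n:ZMod 7) * (3*w))]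
        congr 1
        push_cast
        ring
    have hconst : ∀ y, M y = M 0 := fun y => by
      have := iter ((y * (3*w)⁻¹).val)
      rw [ZMod.natCast_rightInverse _, mul_assoc, inv_mul_cancel₀ h3w, mul_one] at this
      exact this.symm
    have : (7:ℕ) * M 0 = 4 := by
      have hs : ∑ x : ZMod 7, M x = ∑ _x : ZMod 7, M 0 :=
        Finset.sum_congr rfl (fun x _ => hconst x)
      rw [hsumM, Finset.sum_const, Finset.card_univ, ZMod.card, smul_eq_mul] at hs
      omega
    omega

section Core

local notation "M4" => Matrix (Fin 4) (Fin 4) ℂ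

private lemma v2 : (2:ZMod 7).val = 2 := by decide
private lemma v6 : (6:ZMod 7).val = 6 := by decide
private lemma mul24 : (2:ZMod 7) * 4 = 1 := by decide
private lemma mul66 : (6:ZMod 7) * 6 = 1 := by decide
private lemma inv2 : (2:ZMod 7)⁻¹ = 4 := by
  haveI : Fact (Nat.Prime 7) := ⟨by norm_num⟩
  exact inv_eq_of_mul_eq_one_right mul24
private lemma inv6 : (6:ZMod 7)⁻¹ = 6 := by
  haveI : Fact (Nat.Prime 7) := ⟨by norm_num⟩
  exact inv_eq_of_mul_eq_one_right mul66
private lemma ne2 : (2:ZMod 7) ≠ 0 := by decide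
private lemma ne6 : (6:ZMod 7) ≠ 0 := by decide
private lemma z7' : (7:ZMod 7) = 0 := by decide

variable (ζ : ℂ) (A : M4)

/-- The `j`-th spectral sum (unnormalized projector). -/
private noncomputable def Sm (j : ZMod 7) : M4 := ∑ k : ZMod 7, ζ ^ ((j*k).val) • A ^ (k.val)

/-- The `j`-th spectral projector of a matrix of order dividing 7. -/
private noncomputable def Pm (j : ZMod 7) : M4 := (7:ℂ)⁻¹ • Sm ζ A j

private lemma sum_coeff (hζ : IsPrimitiveRoot ζ 7) (k : ZMod 7) (hk : k ≠ 0) :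
    (∑ j : ZMod 7, ζ ^ ((j*k).val)) = 0 := by
  haveI : Fact (Nat.Prime 7) := ⟨by norm_num⟩
  calc (∑ j : ZMod 7, ζ ^ ((j*k).val))
      = ∑ j : ZMod 7, ζ ^ (j.val) :=
        Fintype.sum_equiv (Equiv.mulRight₀ k hk) _ _ (fun j => rfl)
    _ = ∑ i ∈ Finset.range 7, ζ ^ i := by
        rw [sum_zmod]
        exact Finset.sum_congr rfl fun i _ => by
          rw [ZMod.val_natCast, pow_mod_seven ζ hζ.pow_eq_one]
    _ = 0 := hζ.geom_sum_eq_zero (by norm_num)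

private lemma sum_Pm (hζ : IsPrimitiveRoot ζ 7) : ∑ j : ZMod 7, Pm ζ A j = 1 := by
  have hS : ∑ j : ZMod 7, Sm ζ A j = (7:ℂ) • 1 := by
    unfold Sm
    rw [Finset.sum_comm]
    rw [Finset.sum_congr rfl fun k _ => (Finset.sum_smul).symm]
    rw [Fintype.sum_eq_single (0 : ZMod 7) (fun k hk => by rw [sum_coeff ζ hζ k hk, zero_smul])]
    norm_num
  unfold Pm
  rw [← Finset.smul_sum, hS, smul_smul, inv_mul_cancel₀ (by norm_num : (7:ℂ) ≠ 0), one_smul]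

private lemma Pm_idem (hζ7 : ζ ^ 7 = 1) (hA : A ^ 7 = 1) (j : ZMod 7) :
    Pm ζ A j * Pm ζ A j = Pm ζ A j := by
  have hSS : Sm ζ A j * Sm ζ A j = (7:ℕ) • Sm ζ A j := by
    unfold Sm
    rw [Finset.sum_mul_sum]
    have step : ∀ k l : ZMod 7,
        (ζ ^ ((j*k).val) • A ^ k.val) * (ζ ^ ((j*l).val) • A ^ l.val)
          = ζ ^ ((j*(k+l)).val) • A ^ ((k+l).val) := fun k l => by
      rw [smul_mul_smul_comm, ← pow_add, ← pow_add]
      have e1 : ζ ^ ((j*(k+l)).val) = ζ ^ ((j*k).val + (j*l).val) := by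
        rw [mul_add, pow_val_add ζ hζ7, pow_add]
      have e2 : A ^ ((k+l).val) = A ^ (k.val + l.val) := by
        rw [pow_val_add A hA, pow_add]
      rw [e1, e2]
    rw [Finset.sum_congr rfl fun k _ => Finset.sum_congr rfl fun l _ => step k l]
    have inner : ∀ k : ZMod 7,
        (∑ l : ZMod 7, ζ ^ ((j*(k+l)).val) • A ^ ((k+l).val))
          = ∑ s : ZMod 7, ζ ^ ((j*s).val) • A ^ (s.val) := fun k =>
      Equiv.sum_comp (Equiv.addLeft k) (fun s => ζ ^ ((j*s).val) • A ^ (s.val))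
    rw [Finset.sum_congr rfl fun k _ => inner k, Finset.sum_const, Finset.card_univ, ZMod.card]
  unfold Pm
  rw [smul_mul_smul_comm, hSS, ← Nat.cast_smul_eq_nsmul ℂ, smul_smul]
  congr 1
  push_cast
  field_simp


private lemma Pm_eig (hζ7 : ζ ^ 7 = 1) (hA : A ^ 7 = 1) (j : ZMod 7) :
    A * Pm ζ A j = ζ ^ ((6*j).val) • Pm ζ A j := by
  have hS : A * Sm ζ A j = ζ ^ ((6*j).val) • Sm ζ A j := by
    have hG1 : ∀ k : ZMod 7, A * (ζ ^ ((j*k).val) • A ^ k.val)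
        = ζ ^ ((j*(k+1) + 6*j).val) • A ^ ((k+1).val) := fun k => by
      have e1 : (j*(k+1) + 6*j) = j*k := by linear_combination j*z7'
      have e2 : A ^ ((k+1).val) = A ^ k.val * A := by
        rw [pow_val_add A hA k 1, show (1:ZMod 7).val = 1 from rfl, pow_one]
      rw [e1, e2, mul_smul_comm]
      congr 1
      rw [← pow_succ, ← pow_succ']
    have hG2 : ∀ s : ZMod 7, ζ ^ ((6*j).val) • (ζ ^ ((j*s).val) • A ^ s.val)
        = ζ ^ ((j*s + 6*j).val) • A ^ s.val := fun s => by
      rw [smul_smul, ← pow_val_add ζ hζ7 (6*j) (j*s), add_comm (6*j) (j*s)]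
    calc A * Sm ζ A j = ∑ k : ZMod 7, ζ ^ ((j*(k+1) + 6*j).val) • A ^ ((k+1).val) := by
          rw [Sm, Finset.mul_sum]; exact Finset.sum_congr rfl fun k _ => hG1 k
      _ = ∑ s : ZMod 7, ζ ^ ((j*s + 6*j).val) • A ^ (s.val) :=
          Equiv.sum_comp (Equiv.addRight (1:ZMod 7)) (fun s => ζ ^ ((j*s + 6*j).val) • A ^ (s.val))
      _ = ζ ^ ((6*j).val) • Sm ζ A j := by
          rw [Sm, Finset.smul_sum]; exact (Finset.sum_congr rfl fun s _ => hG2 s).symm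
  unfold Pm
  rw [mul_smul_comm, hS, smul_smul, smul_smul, mul_comm]

private lemma conj_Sm (hζ7 : ζ ^ 7 = 1) (hA : A ^ 7 = 1) (U : (Matrix (Fin 4) (Fin 4) ℂ)ˣ)
    (t r : ZMod 7) (hr : r ≠ 0)
    (hU : (U : Matrix (Fin 4) (Fin 4) ℂ) * A * (↑U⁻¹ : Matrix (Fin 4) (Fin 4) ℂ)
      = ζ ^ t.val • A ^ r.val) (j : ZMod 7) :
    (U : Matrix (Fin 4) (Fin 4) ℂ) * Sm ζ A j * (↑U⁻¹ : Matrix (Fin 4) (Fin 4) ℂ)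
      = Sm ζ A (r⁻¹ * (j + t)) := by
  haveI : Fact (Nat.Prime 7) := ⟨by norm_num⟩
  have hUk : ∀ k : ZMod 7, (U : Matrix (Fin 4) (Fin 4) ℂ) * A ^ k.val
        * (↑U⁻¹ : Matrix (Fin 4) (Fin 4) ℂ)
      = ζ ^ ((t*k).val) • A ^ ((r*k).val) := fun k => by
    have h := Units.conj_pow U A k.val
    rw [hU, smul_pow, ← pow_mul, ← pow_mul] at h
    rw [← h, pow_val_mul ζ hζ7 t k, pow_val_mul A hA r k, pow_mul, pow_mul]
  have step : ∀ k : ZMod 7,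
      (U : Matrix (Fin 4) (Fin 4) ℂ) * (ζ ^ ((j*k).val) • A ^ k.val)
          * (↑U⁻¹ : Matrix (Fin 4) (Fin 4) ℂ)
        = ζ ^ (((j+t)*k).val) • A ^ ((r*k).val) := fun k => by
    rw [mul_smul_comm, smul_mul_assoc, hUk k, smul_smul, ← pow_val_add ζ hζ7 (j*k) (t*k),
      ← add_mul]
  have key : ∀ s : ZMod 7,
      ζ ^ (((j+t)*(r⁻¹*s)).val) • A ^ ((r*(r⁻¹*s)).val)
        = ζ ^ (((r⁻¹*(j+t))*s).val) • A ^ (s.val) := fun s => by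
    rw [mul_inv_cancel_left₀ hr]
    ring_nf
  calc (U : Matrix (Fin 4) (Fin 4) ℂ) * Sm ζ A j * (↑U⁻¹ : Matrix (Fin 4) (Fin 4) ℂ)
      = ∑ k : ZMod 7, ζ ^ (((j+t)*k).val) • A ^ ((r*k).val) := by
        rw [Sm, Finset.mul_sum, Finset.sum_mul]
        exact Finset.sum_congr rfl fun k _ => step k
    _ = ∑ s : ZMod 7, ζ ^ (((j+t)*(r⁻¹*s)).val) • A ^ ((r*(r⁻¹*s)).val) :=
        (Equiv.sum_comp (Equiv.mulLeft₀ r⁻¹ (inv_ne_zero hr))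
          (fun k => ζ ^ (((j+t)*k).val) • A ^ ((r*k).val))).symm
    _ = Sm ζ A (r⁻¹ * (j + t)) := by
        rw [Sm]
        exact Finset.sum_congr rfl fun s _ => key s

private lemma conj_Pm (hζ7 : ζ ^ 7 = 1) (hA : A ^ 7 = 1) (U : (Matrix (Fin 4) (Fin 4) ℂ)ˣ)
    (t r : ZMod 7) (hr : r ≠ 0)
    (hU : (U : Matrix (Fin 4) (Fin 4) ℂ) * A * (↑U⁻¹ : Matrix (Fin 4) (Fin 4) ℂ)
      = ζ ^ t.val • A ^ r.val) (j : ZMod 7) :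
    (U : Matrix (Fin 4) (Fin 4) ℂ) * Pm ζ A j * (↑U⁻¹ : Matrix (Fin 4) (Fin 4) ℂ)
      = Pm ζ A (r⁻¹ * (j + t)) := by
  unfold Pm
  rw [mul_smul_comm, smul_mul_assoc, conj_Sm ζ A hζ7 hA U t r hr hU j]

/-- **Core rigidity lemma**: a `4×4` complex matrix of order dividing 7 that is conjugate
(up to scalars) to both its square and its 6th power must be scalar. -/
private lemma core (A : Matrix (Fin 4) (Fin 4) ℂ) (C D : (Matrix (Fin 4) (Fin 4) ℂ)ˣ)
    (μ ν : ℂ) (hA : A ^ 7 = 1)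
    (hC : (C : Matrix (Fin 4) (Fin 4) ℂ) * A * (↑C⁻¹ : Matrix (Fin 4) (Fin 4) ℂ) = μ • A ^ 2)
    (hD : (D : Matrix (Fin 4) (Fin 4) ℂ) * A * (↑D⁻¹ : Matrix (Fin 4) (Fin 4) ℂ) = ν • A ^ 6) :
    ∃ c : ℂ, A = c • (1 : Matrix (Fin 4) (Fin 4) ℂ) := by
  haveI : Fact (Nat.Prime 7) := ⟨by norm_num⟩
  obtain ⟨ζ, hζ⟩ : ∃ ζ : ℂ, IsPrimitiveRoot ζ 7 :=
    ⟨_, Complex.isPrimitiveRoot_exp 7 (by norm_num)⟩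
  have hζ7 : ζ ^ 7 = 1 := hζ.pow_eq_one
  -- the scalars are 7-th roots of unity
  have scalar_pow : ∀ (U : (Matrix (Fin 4) (Fin 4) ℂ)ˣ) (c : ℂ) (m : ℕ),
      (U : Matrix (Fin 4) (Fin 4) ℂ) * A * (↑U⁻¹ : Matrix (Fin 4) (Fin 4) ℂ) = c • A ^ m →
      A ^ (m * 7) = 1 → c ^ 7 = 1 := by
    intro U c m hU hm
    have h := Units.conj_pow U A 7
    rw [hU, hA, mul_one, Units.mul_inv, smul_pow, ← pow_mul, hm] at h
    have := congrFun (congrFun h 0) 0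
    simpa using this
  have hμ7 : μ ^ 7 = 1 := scalar_pow C μ 2 hC (by rw [mul_comm, pow_mul, hA, one_pow])
  have hν7 : ν ^ 7 = 1 := scalar_pow D ν 6 hD (by rw [mul_comm, pow_mul, hA, one_pow])
  obtain ⟨ui, -, hui⟩ := hζ.eq_pow_of_pow_eq_one hμ7
  obtain ⟨wi, -, hwi⟩ := hζ.eq_pow_of_pow_eq_one hν7
  set u : ZMod 7 := (ui : ZMod 7) with hu
  set w : ZMod 7 := (wi : ZMod 7) with hw
  have hμu : μ = ζ ^ u.val := by
    rw [hu, ZMod.val_natCast, pow_mod_seven ζ hζ7, hui]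
  have hνw : ν = ζ ^ w.val := by
    rw [hw, ZMod.val_natCast, pow_mod_seven ζ hζ7, hwi]
  have hCζ : (C : Matrix (Fin 4) (Fin 4) ℂ) * A * (↑C⁻¹ : Matrix (Fin 4) (Fin 4) ℂ)
      = ζ ^ (u.val) • A ^ ((2 : ZMod 7).val) := by rw [v2, ← hμu]; exact hC
  have hDζ : (D : Matrix (Fin 4) (Fin 4) ℂ) * A * (↑D⁻¹ : Matrix (Fin 4) (Fin 4) ℂ)
      = ζ ^ (w.val) • A ^ ((6 : ZMod 7).val) := by rw [v6, ← hνw]; exact hD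
  -- natural-number traces of the spectral projectors
  have hNex : ∀ j : ZMod 7, ∃ n : ℕ, (Pm ζ A j).trace = (n : ℂ) ∧ (n = 0 → Pm ζ A j = 0) :=
    fun j => idem_trace_nat _ (Pm_idem ζ A hζ7 hA j)
  choose N hN hN0 using hNex
  -- invariances of the multiplicities
  have htrace_eq : ∀ (U : (Matrix (Fin 4) (Fin 4) ℂ)ˣ) (t r : ZMod 7) (hr : r ≠ 0),
      ((U : Matrix (Fin 4) (Fin 4) ℂ) * A * (↑U⁻¹ : Matrix (Fin 4) (Fin 4) ℂ)
        = ζ ^ t.val • A ^ r.val) → ∀ j, N j = N (r⁻¹ * (j + t)) := by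
    intro U t r hr hU j
    have h := conj_Pm ζ A hζ7 hA U t r hr hU j
    have htr : (Pm ζ A j).trace = (Pm ζ A (r⁻¹ * (j + t))).trace := by
      rw [← h, Matrix.trace_units_conj]
    rw [hN, hN] at htr
    exact_mod_cast htr
  have h1 : ∀ j, N j = N (4*j + 4*u) := fun j => by
    have := htrace_eq C u 2 ne2 hCζ j
    rwa [inv2, show (4:ZMod 7) * (j + u) = 4*j + 4*u by ring] at this
  have h2 : ∀ j, N j = N (6*j + 6*w) := fun j => by
    have := htrace_eq D w 6 ne6 hDζ j
    rwa [inv6, show (6:ZMod 7) * (j + w) = 6*j + 6*w by ring] at this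
  -- total multiplicity is 4
  have hsum : ∑ j : ZMod 7, N j = 4 := by
    have h := congrArg Matrix.trace (sum_Pm ζ A hζ)
    rw [Matrix.trace_sum, Matrix.trace_one] at h
    norm_num at h
    have h' : ((∑ j : ZMod 7, N j : ℕ) : ℂ) = (4 : ℂ) := by
      push_cast
      rw [← h]
      exact Finset.sum_congr rfl fun j _ => (hN j).symm
    exact_mod_cast h'
  obtain ⟨p, hp4, hp0⟩ := endgame N (4*u) (6*w) h1 h2 hsum
  have hPp : Pm ζ A p = 1 := by
    have hz : ∀ j : ZMod 7, j ≠ p → Pm ζ A j = 0 := fun j hj => hN0 j (hp0 j hj)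
    have := Fintype.sum_eq_single p hz
    rw [sum_Pm ζ A hζ] at this
    exact this.symm
  have hfin := Pm_eig ζ A hζ7 hA p
  rw [hPp, mul_one] at hfin
  exact ⟨ζ ^ ((6*p).val), hfin⟩

end Core

/-- No injective homomorphism into `GL₄(ℂ)` from a group containing an element of order 7
conjugate to both its square and its 6th power. -/
private lemma noRep {G : Type*} [Group G] (s c d : G) (h7 : s ^ 7 = 1) (h1 : s ≠ 1)
    (hc : c * s * c⁻¹ = s ^ 2) (hd : d * s * d⁻¹ = s ^ (6:ℕ))
    (ρ : G →* GL (Fin 4) ℂ) (hρ : Function.Injective ρ) : False := by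
  have hA : ((ρ s : GL (Fin 4) ℂ) : Matrix (Fin 4) (Fin 4) ℂ) ^ 7 = 1 := by
    rw [← Units.val_pow_eq_pow_val, ← _root_.map_pow, h7, _root_.map_one, Units.val_one]
  have conjmat : ∀ (g : G) (m : ℕ), g * s * g⁻¹ = s ^ m →
      ((ρ g : GL (Fin 4) ℂ) : Matrix (Fin 4) (Fin 4) ℂ)
          * ((ρ s : GL (Fin 4) ℂ) : Matrix (Fin 4) (Fin 4) ℂ)
          * ((↑(ρ g)⁻¹ : GL (Fin 4) ℂ) : Matrix (Fin 4) (Fin 4) ℂ)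
        = (1:ℂ) • ((ρ s : GL (Fin 4) ℂ) : Matrix (Fin 4) (Fin 4) ℂ) ^ m := by
    intro g m hg
    have h := congrArg ρ hg
    rw [_root_.map_mul, _root_.map_mul, _root_.map_inv, _root_.map_pow] at h
    have h' := congrArg Units.val h
    rw [Units.val_mul, Units.val_mul, Units.val_pow_eq_pow_val] at h'
    rw [one_smul]
    exact h'
  obtain ⟨e, he⟩ := core _ (ρ c) (ρ d) 1 1 hA (conjmat c 2 hc) (conjmat d 6 hd)
  -- the scalar is 1, so ρ s = 1
  have hC := conjmat c 2 hc
  rw [one_smul, he] at hC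
  have hCC : (↑(ρ c) : Matrix (Fin 4) (Fin 4) ℂ) * (e • 1)
      * (↑(ρ c)⁻¹ : Matrix (Fin 4) (Fin 4) ℂ) = e • 1 := by
    rw [mul_smul_comm, mul_one, smul_mul_assoc, ← Units.val_mul, mul_inv_cancel, Units.val_one]
  rw [smul_pow, one_pow] at hC
  rw [hCC] at hC
  have he7 : e ^ 7 = 1 := by
    have := hA
    rw [he, smul_pow, one_pow] at this
    have h00 := congrFun (congrFun this 0) 0
    simpa using h00
  have hee : e = e ^ 2 := by
    have h00 := congrFun (congrFun hC 0) 0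
    simpa using h00
  have he0 : e ≠ 0 := by
    intro h0
    rw [h0] at he7
    norm_num at he7
  have he1 : e = 1 :=
    (mul_left_cancel₀ he0 (show e * 1 = e * e by rw [mul_one, ← pow_two, ← hee])).symm
  have hs1 : ρ s = 1 := by
    apply Units.ext
    rw [he, he1, one_smul, Units.val_one]
  exact h1 (hρ (hs1.trans (map_one ρ).symm))


/-- The 7-cycle `x ↦ x + 1` on `Fin 7`. -/
private def sigma7 : Equiv.Perm (Fin 7) :=
  ⟨fun x => x + 1, fun x => x - 1, by decide, by decide⟩

/-- The permutation `x ↦ 2x` of `Fin 7`, conjugating `sigma7` to its square. -/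
private def tau7 : Equiv.Perm (Fin 7) :=
  ⟨fun x => 2 * x, fun x => 4 * x, by decide, by decide⟩

/-- The permutation `x ↦ -x` of `Fin 7`, conjugating `sigma7` to its inverse. -/
private def theta7 : Equiv.Perm (Fin 7) :=
  ⟨fun x => -x, fun x => -x, by decide, by decide⟩

private lemma sigma7_pow7 : sigma7 ^ 7 = 1 := by decide
private lemma sigma7_ne : sigma7 ≠ 1 := by decide
private lemma sigma7_conj_tau : tau7 * sigma7 * tau7⁻¹ = sigma7 ^ 2 := by decide
private lemma sigma7_conj_theta : theta7 * sigma7 * theta7⁻¹ = sigma7 ^ (6:ℕ) := by decide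

private lemma part1 (ρ : Equiv.Perm (Fin 7) →* GL (Fin 4) ℂ) : ¬ Function.Injective ρ :=
  fun h => noRep sigma7 tau7 theta7 sigma7_pow7 sigma7_ne sigma7_conj_tau sigma7_conj_theta ρ h

private lemma part2 (E : Type) (_ : Group E) (π : E →* Equiv.Perm (Fin 7))
    (hsurj : Function.Surjective π) (hcard : Nat.card π.ker = 2)
    (hcent : (π.ker : Subgroup E) ≤ Subgroup.center E)
    (ρ : E →* GL (Fin 4) ℂ) : ¬ Function.Injective ρ := by
  intro hinj
  obtain ⟨s0, hs0⟩ := hsurj sigma7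
  obtain ⟨c0, hc0⟩ := hsurj tau7
  obtain ⟨d0, hd0⟩ := hsurj theta7
  have hker2 : ∀ x ∈ π.ker, x ^ 2 = 1 := by
    intro x hx
    have h := pow_card_eq_one' (G := π.ker) (x := ⟨x, hx⟩)
    rw [hcard] at h
    simpa [Subtype.ext_iff] using h
  have hs7ker : s0 ^ 7 ∈ π.ker := by
    rw [MonoidHom.mem_ker, _root_.map_pow, hs0, sigma7_pow7]
  have hs14 : s0 ^ 14 = 1 := by
    have h := hker2 _ hs7ker
    rw [← pow_mul] at h
    exact h
  set s : E := s0 ^ 8 with hs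
  have hπs : π s = sigma7 := by
    rw [hs, _root_.map_pow, hs0, pow_succ, sigma7_pow7, one_mul]
  have hs7 : s ^ 7 = 1 := by
    rw [hs, ← pow_mul, show 8 * 7 = 14 * 4 from rfl, pow_mul, hs14, one_pow]
  have hsne : s ≠ 1 := by
    intro h
    rw [h, _root_.map_one] at hπs
    exact sigma7_ne hπs.symm
  have kill : ∀ (g : E) (t : Equiv.Perm (Fin 7)) (m : ℕ), π g = t →
      t * sigma7 * t⁻¹ = sigma7 ^ m → g * s * g⁻¹ = s ^ m := by
    intro g t m hg ht
    set ε : E := (s ^ m)⁻¹ * (g * s * g⁻¹) with hε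
    have hεker : ε ∈ π.ker := by
      rw [MonoidHom.mem_ker, hε, _root_.map_mul, _root_.map_inv, _root_.map_pow,
        _root_.map_mul, _root_.map_mul, _root_.map_inv, hπs, hg, ht]
      group
    have hεcomm : ∀ y : E, y * ε = ε * y := fun y => Subgroup.mem_center_iff.mp (hcent hεker) y
    have hε2 : ε ^ 2 = 1 := hker2 ε hεker
    have hgs : g * s * g⁻¹ = s ^ m * ε := by rw [hε]; group
    have h7 : (g * s * g⁻¹) ^ 7 = 1 := by
      rw [conj_pow, hs7, mul_one, mul_inv_cancel]
    have hcomm : Commute (s ^ m) ε := hεcomm (s ^ m)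
    have hε7 : ε ^ 7 = 1 := by
      have h := h7
      rw [hgs, hcomm.mul_pow, ← pow_mul, mul_comm m 7, pow_mul, hs7, one_pow, one_mul] at h
      exact h
    have hε1 : ε = 1 := by
      have h := hε7
      rw [show (7:ℕ) = 2 * 3 + 1 from rfl, pow_add, pow_mul, hε2, one_pow, one_mul, pow_one] at h
      exact h
    rw [hgs, hε1, mul_one]
  exact noRep s c0 d0 hs7 hsne (kill c0 tau7 2 hc0 sigma7_conj_tau)
    (kill d0 theta7 6 hd0 sigma7_conj_theta) ρ hinj

/-- Elements of the center of `GL₄(ℂ)` are nonzero scalar matrices. -/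
private lemma center_scalar (u : GL (Fin 4) ℂ) (hu : u ∈ Subgroup.center (GL (Fin 4) ℂ)) :
    ∃ e : ℂ, (u : Matrix (Fin 4) (Fin 4) ℂ) = e • 1 ∧ e ≠ 0 := by
  have hcomm : ∀ t : TransvectionStruct (Fin 4) ℂ,
      Commute t.toMatrix (u : Matrix (Fin 4) (Fin 4) ℂ) := by
    intro t
    have h := Subgroup.mem_center_iff.mp hu
      (⟨t.toMatrix, t.inv.toMatrix, t.mul_inv, t.inv_mul⟩ : GL (Fin 4) ℂ)
    have h' := congrArg Units.val h
    rw [Units.val_mul, Units.val_mul] at h'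
    exact h'
  obtain ⟨e, he⟩ := Matrix.mem_range_scalar_of_commute_transvectionStruct hcomm
  refine ⟨e, ?_, ?_⟩
  · rw [← he]
    ext i j
    simp [Matrix.scalar_apply, Matrix.smul_apply, Matrix.one_apply, Matrix.diagonal]
  · intro h0
    have h1 := u.mul_inv
    rw [← he, h0] at h1
    simp only [map_zero, zero_mul] at h1
    have := congrFun (congrFun h1 0) 0
    simp [Matrix.one_apply] at this
/-- Scalar matrices are central in `GL₄(ℂ)`. -/
private lemma scalar_center (u : GL (Fin 4) ℂ) (e : ℂ)
    (he : (u : Matrix (Fin 4) (Fin 4) ℂ) = e • 1) :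
    u ∈ Subgroup.center (GL (Fin 4) ℂ) := by
  rw [Subgroup.mem_center_iff]
  intro g
  apply Units.ext
  rw [Units.val_mul, Units.val_mul, he, mul_smul_comm, smul_mul_assoc, mul_one, one_mul]

private lemma part3
    (f : Equiv.Perm (Fin 7) →* GL (Fin 4) ℂ ⧸ Subgroup.center (GL (Fin 4) ℂ)) :
    ¬ Function.Injective f := by
  intro hf
  set q := QuotientGroup.mk' (Subgroup.center (GL (Fin 4) ℂ)) with hq
  obtain ⟨Au, hAu⟩ := QuotientGroup.mk'_surjective _ (f sigma7)
  obtain ⟨Cu, hCu⟩ := QuotientGroup.mk'_surjective _ (f tau7)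
  obtain ⟨Du, hDu⟩ := QuotientGroup.mk'_surjective _ (f theta7)
  -- Au^7 is central, hence a nonzero scalar
  have h7c : Au ^ 7 ∈ Subgroup.center (GL (Fin 4) ℂ) := by
    rw [← QuotientGroup.eq_one_iff]
    show q (Au ^ 7) = 1
    rw [_root_.map_pow, hAu, ← _root_.map_pow, sigma7_pow7, _root_.map_one]
  obtain ⟨cc, hcc, hcc0⟩ := center_scalar _ h7c
  rw [Units.val_pow_eq_pow_val] at hcc
  obtain ⟨lam, hlam⟩ := IsAlgClosed.exists_pow_nat_eq (cc⁻¹) (n := 7) (by norm_num)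
  have hlam0 : lam ≠ 0 := by
    intro h
    rw [h] at hlam
    exact inv_ne_zero hcc0 (by simpa using hlam.symm)
  set A : Matrix (Fin 4) (Fin 4) ℂ := lam • (↑Au : Matrix (Fin 4) (Fin 4) ℂ) with hAdef
  have hA7 : A ^ 7 = 1 := by
    rw [hAdef, smul_pow, hcc, hlam, smul_smul, inv_mul_cancel₀ hcc0, one_smul]
  -- relations up to nonzero scalars
  have rel : ∀ (Uu : GL (Fin 4) ℂ) (t : Equiv.Perm (Fin 7)) (m : ℕ), q Uu = f t →
      t * sigma7 * t⁻¹ = sigma7 ^ m →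
      ∃ κ : ℂ, (↑Uu : Matrix (Fin 4) (Fin 4) ℂ) * (↑Au : Matrix (Fin 4) (Fin 4) ℂ)
          * (↑Uu⁻¹ : Matrix (Fin 4) (Fin 4) ℂ) = κ • (↑Au : Matrix (Fin 4) (Fin 4) ℂ) ^ m := by
    intro Uu t m hU ht
    have hmk : q (Uu * Au * Uu⁻¹) = q (Au ^ m) := by
      rw [_root_.map_mul, _root_.map_mul, _root_.map_inv, _root_.map_pow, hU, hAu,
        ← _root_.map_inv f, ← _root_.map_mul, ← _root_.map_mul, ← _root_.map_pow, ht]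
    rw [hq] at hmk
    obtain ⟨z, hz, hzeq⟩ := (QuotientGroup.mk'_eq_mk' (Subgroup.center (GL (Fin 4) ℂ))).mp hmk
    obtain ⟨e, he, he0⟩ := center_scalar z hz
    have h := congrArg Units.val hzeq
    simp only [Units.val_mul] at h
    rw [Units.val_pow_eq_pow_val, he, mul_smul_comm, mul_one] at h
    refine ⟨e⁻¹, ?_⟩
    rw [← h, smul_smul, inv_mul_cancel₀ he0, one_smul]
  obtain ⟨κC, hκC⟩ := rel Cu tau7 2 hCu sigma7_conj_tau
  obtain ⟨κD, hκD⟩ := rel Du theta7 6 hDu sigma7_conj_theta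
  have hCrel : (↑Cu : Matrix (Fin 4) (Fin 4) ℂ) * A * (↑Cu⁻¹ : Matrix (Fin 4) (Fin 4) ℂ)
      = (κC * lam⁻¹) • A ^ 2 := by
    rw [hAdef, mul_smul_comm, smul_mul_assoc, hκC, smul_pow, smul_smul, smul_smul]
    congr 1
    field_simp
  have hDrel : (↑Du : Matrix (Fin 4) (Fin 4) ℂ) * A * (↑Du⁻¹ : Matrix (Fin 4) (Fin 4) ℂ)
      = (κD * (lam ^ 5)⁻¹) • A ^ 6 := by
    rw [hAdef, mul_smul_comm, smul_mul_assoc, hκD, smul_pow, smul_smul, smul_smul]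
    congr 1
    field_simp
  obtain ⟨e, he⟩ := core A Cu Du _ _ hA7 hCrel hDrel
  have hAu_scalar : (↑Au : Matrix (Fin 4) (Fin 4) ℂ) = (lam⁻¹ * e) • 1 := by
    calc (↑Au : Matrix (Fin 4) (Fin 4) ℂ) = lam⁻¹ • A := by
          rw [hAdef, smul_smul, inv_mul_cancel₀ hlam0, one_smul]
      _ = (lam⁻¹ * e) • 1 := by rw [he, smul_smul]
  have hfs1 : f sigma7 = 1 := by
    rw [← hAu]
    exact (QuotientGroup.eq_one_iff Au).mpr (scalar_center Au _ hAu_scalar)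
  exact sigma7_ne (hf (by rw [hfs1, _root_.map_one]))



/-- `PGL₄(ℂ) = GL₄(ℂ)/center`. -/
abbrev ProjectiveGeneralLinearGroup4C : Type :=
  GL (Fin 4) ℂ ⧸ Subgroup.center (GL (Fin 4) ℂ)

/-- Neither `S₇` nor any double cover `2.S₇` (a central extension of `S₇` by `ℤ/2`)
admits a faithful 4-dimensional complex representation; consequently `S₇` does not
embed into `PGL₄(ℂ)`. -/
theorem S7_and_double_cover_no_faithful_4dim_rep :
    (∀ ρ : Equiv.Perm (Fin 7) →* GL (Fin 4) ℂ, ¬ Function.Injective ρ) ∧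
    (∀ (E : Type) (_ : Group E) (π : E →* Equiv.Perm (Fin 7)),
      Function.Surjective π → Nat.card π.ker = 2 →
      (π.ker : Subgroup E) ≤ Subgroup.center E →
      ∀ ρ : E →* GL (Fin 4) ℂ, ¬ Function.Injective ρ) ∧
    (∀ f : Equiv.Perm (Fin 7) →* ProjectiveGeneralLinearGroup4C,
      ¬ Function.Injective f) := by
  refine ⟨part1, ?_, part3⟩
  intro E hE π hsurj hcard hcent ρ
  exact part2 E hE π hsurj hcard hcent ρ
end
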